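/- arXiv:2409.19279 — 5 statements merged into one kernel-verified Lean document; each statement's English description precedes it below -/
import Mathlib

section
/- Let H be a finite-dimensional real inner product space, let a : ℝ → ℝ be continuously differentiable, b : ℝ → ℝ be continuous, and let U : H × ℝ → ℝ be continuously differentiable, with ∇_w U(w,t) denoting its gradient in the first argument and ∂U/∂t(w,t) its partial derivative in the second argument. Let w : ℝ → H be twice continuously differentiable and satisfy, for all t ≥ t₀, the second-order ODE a(t)·ẅ(t) + b(t)·ẇ(t) + ∇_w U(w(t),t) = 0. Then for all t ≥ t₀ the following energy conservation law holds: (a(t)/2)·‖ẇ(t)‖² + ∫_{t₀}^{t} (b(s) − ȧ(s)/2)·‖ẇ(s)‖² ds + U(w(t),t) − ∫_{t₀}^{t} (∂U/∂s)(w(s),s) ds = (a(t₀)/2)·‖ẇ(t₀)‖² + U(w(t₀),t₀). -/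
open scoped RealInnerProductSpace

/-- Energy conservation law for the second-order ODE
`a(t)·ẅ + b(t)·ẇ + ∇_w U(w,t) = 0` in a finite-dimensional real inner product space. -/
theorem energy_conservation_law
    {H : Type*} [NormedAddCommGroup H] [InnerProductSpace ℝ H] [FiniteDimensional ℝ H]
    (a b : ℝ → ℝ) (U : H × ℝ → ℝ) (w : ℝ → H) (t₀ : ℝ)
    (ha : ContDiff ℝ 1 a) (hb : Continuous b) (hU : ContDiff ℝ 1 U)
    (hw : ContDiff ℝ 2 w)
    (hode : ∀ t ≥ t₀, a t • deriv (deriv w) t + b t • deriv w t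
      + gradient (fun x => U (x, t)) (w t) = 0) :
    ∀ t ≥ t₀,
      (a t / 2) * ‖deriv w t‖ ^ 2
        + (∫ s in t₀..t, (b s - deriv a s / 2) * ‖deriv w s‖ ^ 2)
        + U (w t, t)
        - (∫ s in t₀..t, deriv (fun r => U (w s, r)) s)
      = (a t₀ / 2) * ‖deriv w t₀‖ ^ 2 + U (w t₀, t₀) := by
  intro t ht
  -- basic differentiability facts
  have hwd : Differentiable ℝ w := hw.differentiable (by norm_num)
  have hw2 : ContDiff ℝ 1 (deriv w) := by
    have := (contDiff_succ_iff_deriv (n := 1)).1 (by exact_mod_cast hw)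
    exact this.2.2
  have hwd' : Differentiable ℝ (deriv w) := hw2.differentiable one_ne_zero
  have hcw' : Continuous (deriv w) := hwd'.continuous
  have hcw'' : Continuous (deriv (deriv w)) := (contDiff_one_iff_deriv.1 hw2).2
  have hca' : Continuous (deriv a) := (contDiff_one_iff_deriv.1 ha).2
  have hUd : Differentiable ℝ U := hU.differentiable one_ne_zero
  -- the partial derivative in time, as a continuous function of s
  set P : ℝ → ℝ := fun s => fderiv ℝ U (w s, s) (0, 1) with hP
  have hPc : Continuous P := by
    have h1 : Continuous (fun s : ℝ => fderiv ℝ U (w s, s)) :=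
      (hU.continuous_fderiv one_ne_zero).comp ((hwd.continuous).prodMk continuous_id)
    exact (isBoundedBilinearMap_apply.continuous.comp (h1.prodMk continuous_const))
  have hPeq : ∀ s : ℝ, deriv (fun r => U (w s, r)) s = P s := by
    intro s
    have hcurve : HasDerivAt (fun r : ℝ => ((w s, r) : H × ℝ)) (0, 1) s :=
      (hasDerivAt_const s (w s)).prodMk (hasDerivAt_id s)
    have h' := (hUd _).hasFDerivAt.comp_hasDerivAt s hcurve
    exact h'.deriv
  -- energy function
  set E : ℝ → ℝ := fun s => (a s / 2) * ‖deriv w s‖ ^ 2 + U (w s, s) with hE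
  set g : ℝ → ℝ := fun s => (deriv a s / 2 - b s) * ‖deriv w s‖ ^ 2 + P s with hg
  have hEderiv : ∀ s ∈ Set.uIcc t₀ t, HasDerivAt E (g s) s := by
    intro s hs
    have hst₀ : t₀ ≤ s := by
      rw [Set.uIcc_of_le ht] at hs; exact hs.1
    have hda : HasDerivAt a (deriv a s) s := (ha.differentiable one_ne_zero s).hasDerivAt
    have hdw' : HasDerivAt (deriv w) (deriv (deriv w) s) s := (hwd' s).hasDerivAt
    have hnorm : HasDerivAt (fun r => ‖deriv w r‖ ^ 2)
        (2 * ⟪deriv (deriv w) s, deriv w s⟫) s := by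
      have := hdw'.inner (𝕜 := ℝ) hdw'
      simp only [real_inner_self_eq_norm_sq] at this ⊢
      rw [real_inner_comm (deriv (deriv w) s) (deriv w s)] at this
      exact this.congr_deriv (by ring)
    have hcurve : HasDerivAt (fun r : ℝ => ((w r, r) : H × ℝ)) (deriv w s, 1) s :=
      ((hwd s).hasDerivAt).prodMk (hasDerivAt_id s)
    have hUcomp : HasDerivAt (fun r => U (w r, r)) (fderiv ℝ U (w s, s) (deriv w s, 1)) s := by
      have h' := (hUd _).hasFDerivAt.comp_hasDerivAt s hcurve
      exact h'
    -- relate gradient to fderiv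
    have hgrad : ⟪gradient (fun x => U (x, s)) (w s), deriv w s⟫
        = fderiv ℝ U (w s, s) (deriv w s, 0) := by
      have hdiff : DifferentiableAt ℝ (fun x => U (x, s)) (w s) := by
        exact (hUd (w s, s)).comp (w s) (differentiableAt_id.prodMk (differentiableAt_const s))
      have h1 := hdiff.hasGradientAt.hasFDerivAt
      have h2 : HasFDerivAt (fun x => U (x, s)) ((fderiv ℝ U (w s, s)).comp
          ((ContinuousLinearMap.id ℝ H).prod 0)) (w s) := by
        have hc : HasFDerivAt (fun x : H => ((x, s) : H × ℝ))
            ((ContinuousLinearMap.id ℝ H).prod 0) (w s) :=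
          (hasFDerivAt_id (w s)).prodMk (hasFDerivAt_const s (w s))
        exact (hUd (w s, s)).hasFDerivAt.comp (w s) hc
      have := h1.unique h2
      calc ⟪gradient (fun x => U (x, s)) (w s), deriv w s⟫
          = (InnerProductSpace.toDual ℝ H (gradient (fun x => U (x, s)) (w s))) (deriv w s) := rfl
        _ = fderiv ℝ U (w s, s) (deriv w s, 0) := by
            rw [this]; rfl
    -- the ODE gives
    have hodes := hode s hst₀
    have hinner : a s * ⟪deriv (deriv w) s, deriv w s⟫ + b s * ‖deriv w s‖ ^ 2
        + ⟪gradient (fun x => U (x, s)) (w s), deriv w s⟫ = 0 := by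
      have := congrArg (fun v => ⟪v, deriv w s⟫) hodes
      simpa [inner_add_left, real_inner_smul_left, real_inner_self_eq_norm_sq] using this
    -- fderiv splitting
    have hsplit : fderiv ℝ U (w s, s) (deriv w s, 1)
        = fderiv ℝ U (w s, s) (deriv w s, 0) + fderiv ℝ U (w s, s) (0, 1) := by
      rw [← map_add]
      norm_num
    have hE' : HasDerivAt E
        (deriv a s / 2 * ‖deriv w s‖ ^ 2
          + a s / 2 * (2 * ⟪deriv (deriv w) s, deriv w s⟫)
          + fderiv ℝ U (w s, s) (deriv w s, 1)) s := by
      exact ((hda.div_const 2).mul hnorm).add hUcomp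
    convert hE' using 1
    simp only [hg, hP]
    rw [hsplit, ← hgrad]
    nlinarith [hinner]
  -- integrability
  have hgi : IntervalIntegrable g MeasureTheory.volume t₀ t := by
    apply Continuous.intervalIntegrable
    exact ((((hca'.div_const 2).sub hb).mul ((hcw'.norm).pow 2))).add hPc
  have hFTC := intervalIntegral.integral_eq_sub_of_hasDerivAt hEderiv hgi
  have hsplit : (∫ s in t₀..t, g s)
      = (∫ s in t₀..t, (deriv a s / 2 - b s) * ‖deriv w s‖ ^ 2) + ∫ s in t₀..t, P s := by
    apply intervalIntegral.integral_add
    · exact Continuous.intervalIntegrable (((hca'.div_const 2).sub hb).mul ((hcw'.norm).pow 2)) _ _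
    · exact hPc.intervalIntegrable _ _
  have h1 : (∫ s in t₀..t, (b s - deriv a s / 2) * ‖deriv w s‖ ^ 2)
      = - ∫ s in t₀..t, (deriv a s / 2 - b s) * ‖deriv w s‖ ^ 2 := by
    rw [← intervalIntegral.integral_neg]
    congr 1; ext s; ring
  have h2 : (∫ s in t₀..t, deriv (fun r => U (w s, r)) s) = ∫ s in t₀..t, P s := by
    congr 1; ext s; exact hPeq s
  rw [hsplit] at hFTC
  simp only [hE] at hFTC
  rw [h1, h2]
  linarith [hFTC]
end

section
/- Let t₀ > 0 and let X : (0,∞) → H be twice continuously differentiable and satisfy the Dist-AGM dynamics Ẍ(t) + (3/t)·Ẋ(t) + t^{−β}·∇F(X(t)) + L̃X(t) = 0 for all t > 0. Define for t ≥ t₀ the energy E(t) = (1/2)·‖t·Ẋ(t) + 2(X(t) − X*)‖² + (t²/2)·⟨X(t) − X*, L̃(X(t) − X*)⟩ + t^{2−β}·(F(X(t)) − F*) + ∫_{t₀}^{t} s·⟨X(s) − X*, L̃(X(s) − X*)⟩ ds + 2·∫_{t₀}^{t} s^{1−β}·(F* − F(X(s)) − ⟨∇F(X(s)), X* − X(s)⟩)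 ds + β·∫_{t₀}^{t} s^{1−β}·(F(X(s)) − F*) ds. Then E is conserved: for all t ≥ t₀, E(t) = (1/2)·‖t₀·Ẋ(t₀) + 2(X(t₀) − X*)‖² + (t₀²/2)·⟨X(t₀) − X*, L̃(X(t₀) − X*)⟩ + t₀^{2−β}·(F(X(t₀)) − F*). -/
open scoped RealInnerProductSpace

/-- Energy conservation law for the Dist-AGM dynamics
`Ẍ + (3/t)Ẋ + t^{−β}∇F(X) + L̃X = 0`. -/
theorem distAGM_energy_conservation
    {H : Type*} [NormedAddCommGroup H] [InnerProductSpace ℝ H] [FiniteDimensional ℝ H]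
    (F : H → ℝ) (hF : ContDiff ℝ 1 F)
    (L : H →L[ℝ] H) (hsym : ∀ x y : H, ⟪L x, y⟫ = ⟪x, L y⟫)
    (hpsd : ∀ x : H, 0 ≤ ⟪x, L x⟫)
    (Xs : H) (hXs : L Xs = 0)
    (β : ℝ) (hβ : 0 < β)
    (t₀ : ℝ) (ht₀ : 0 < t₀)
    (X : ℝ → H) (hX : ContDiffOn ℝ 2 X (Set.Ioi 0))
    (hode : ∀ t > (0 : ℝ),
      deriv (deriv X) t + (3 / t) • deriv X t
        + (t ^ (-β)) • gradient F (X t) + L (X t) = 0) :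
    ∀ t ≥ t₀,
      (1 / 2) * ‖t • deriv X t + (2 : ℝ) • (X t - Xs)‖ ^ 2
        + (t ^ 2 / 2) * ⟪X t - Xs, L (X t - Xs)⟫
        + t ^ (2 - β) * (F (X t) - F Xs)
        + (∫ s in t₀..t, s * ⟪X s - Xs, L (X s - Xs)⟫)
        + 2 * (∫ s in t₀..t,
            s ^ (1 - β) * (F Xs - F (X s) - ⟪gradient F (X s), Xs - X s⟫))
        + β * (∫ s in t₀..t, s ^ (1 - β) * (F (X s) - F Xs))
      = (1 / 2) * ‖t₀ • deriv X t₀ + (2 : ℝ) • (X t₀ - Xs)‖ ^ 2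
        + (t₀ ^ 2 / 2) * ⟪X t₀ - Xs, L (X t₀ - Xs)⟫
        + t₀ ^ (2 - β) * (F (X t₀) - F Xs) := by
  intro t ht
  -- basic differentiability facts
  have hXd : ∀ u ∈ Set.Ioi (0:ℝ), HasDerivAt X (deriv X u) u := by
    intro u hu
    exact ((hX.differentiableOn (by norm_num)).differentiableAt
      (isOpen_Ioi.mem_nhds hu)).hasDerivAt
  have hV1 : ContDiffOn ℝ 1 (deriv X) (Set.Ioi 0) :=
    hX.deriv_of_isOpen isOpen_Ioi (by norm_num)
  have hVd : ∀ u ∈ Set.Ioi (0:ℝ), HasDerivAt (deriv X) (deriv (deriv X) u) u := by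
    intro u hu
    exact ((hV1.differentiableOn (by norm_num)).differentiableAt
      (isOpen_Ioi.mem_nhds hu)).hasDerivAt
  have hgc : Continuous (fun x => gradient F x) := by
    have h1 : Continuous (fderiv ℝ F) := hF.continuous_fderiv one_ne_zero
    exact (InnerProductSpace.toDual ℝ H).symm.continuous.comp h1
  have hXcont : ContinuousOn X (Set.Ioi 0) := hX.continuousOn
  have hYcont : ContinuousOn (fun s => X s - Xs) (Set.Ioi 0) :=
    hXcont.sub continuousOn_const
  -- continuity of the three integrands on `Ioi 0`
  have hrc : ContinuousOn (fun s : ℝ => s ^ (1-β)) (Set.Ioi 0) := fun s hs =>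
    (Real.continuousAt_rpow_const s _ (Or.inl (ne_of_gt hs))).continuousWithinAt
  have hg1c : ContinuousOn (fun s => s * ⟪X s - Xs, L (X s - Xs)⟫) (Set.Ioi 0) :=
    continuousOn_id.mul (hYcont.inner (L.continuous.comp_continuousOn hYcont))
  have hg2c : ContinuousOn
      (fun s => s ^ (1-β) * (F Xs - F (X s) - ⟪gradient F (X s), Xs - X s⟫))
      (Set.Ioi 0) := by
    apply hrc.mul
    exact (continuousOn_const.sub (hF.continuous.comp_continuousOn hXcont)).sub
      ((hgc.comp_continuousOn hXcont).inner (continuousOn_const.sub hXcont))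
  have hg3c : ContinuousOn (fun s => s ^ (1-β) * (F (X s) - F Xs)) (Set.Ioi 0) :=
    hrc.mul ((hF.continuous.comp_continuousOn hXcont).sub continuousOn_const)
  -- the energy function (inner-product form)
  set E : ℝ → ℝ := fun r =>
    (1 / 2) * ⟪r • deriv X r + (2 : ℝ) • (X r - Xs), r • deriv X r + (2 : ℝ) • (X r - Xs)⟫
      + (r ^ 2 / 2) * ⟪X r - Xs, L (X r - Xs)⟫
      + r ^ (2 - β) * (F (X r) - F Xs)
      + (∫ s in t₀..r, s * ⟪X s - Xs, L (X s - Xs)⟫)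
      + 2 * (∫ s in t₀..r,
          s ^ (1 - β) * (F Xs - F (X s) - ⟪gradient F (X s), Xs - X s⟫))
      + β * (∫ s in t₀..r, s ^ (1 - β) * (F (X s) - F Xs)) with hEdef
  have key : ∀ u ∈ Set.Icc t₀ t, HasDerivAt E 0 u := by
    intro u hu
    have hupos : (0:ℝ) < u := lt_of_lt_of_le ht₀ hu.1
    have huI : u ∈ Set.Ioi (0:ℝ) := hupos
    have hVu := hXd u huI
    have hAu := hVd u huI
    have hYd : HasDerivAt (fun s => X s - Xs) (deriv X u) u := hVu.sub_const Xs
    have hmeas : ∀ (f : ℝ → ℝ), ContinuousOn f (Set.Ioi 0) →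
        StronglyMeasurableAtFilter f (nhds u) MeasureTheory.volume := by
      intro f hf
      exact ⟨Set.Ioi 0, isOpen_Ioi.mem_nhds huI,
        hf.aestronglyMeasurable measurableSet_Ioi⟩
    have hsub : Set.uIcc t₀ u ⊆ Set.Ioi 0 := by
      intro s hs
      rw [Set.uIcc_of_le hu.1] at hs
      exact lt_of_lt_of_le ht₀ hs.1
    -- the ODE, rewritten
    have hLXY : L (X u) = L (X u - Xs) := by rw [map_sub, hXs, sub_zero]
    have hA_eq : deriv (deriv X) u
        = -((3 / u) • deriv X u + (u ^ (-β)) • gradient F (X u) + L (X u - Xs)) := by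
      have h := hode u hupos
      rw [hLXY] at h
      have h2 : deriv (deriv X) u + ((3 / u) • deriv X u
          + (u ^ (-β)) • gradient F (X u) + L (X u - Xs)) = 0 := by
        rw [← h]; abel
      exact eq_neg_of_add_eq_zero_left h2
    -- derivative of W = u • Ẋ + 2 (X - Xs)
    have hWmessy : HasDerivAt (fun s => s • deriv X s + (2:ℝ) • (X s - Xs))
        ((u • deriv (deriv X) u + (1:ℝ) • deriv X u) + (2:ℝ) • deriv X u) u :=
      ((hasDerivAt_id u).smul hAu).add (hYd.const_smul (2:ℝ))
    have hW'eq : (u • deriv (deriv X) u + (1:ℝ) • deriv X u) + (2:ℝ) • deriv X u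
        = -((u * u ^ (-β)) • gradient F (X u) + u • L (X u - Xs)) := by
      rw [hA_eq]
      have h3 : u * (3 / u) = 3 := by field_simp
      rw [smul_neg, smul_add, smul_add, smul_smul, smul_smul, h3]
      module
    have hW : HasDerivAt (fun s => s • deriv X s + (2:ℝ) • (X s - Xs))
        (-((u * u ^ (-β)) • gradient F (X u) + u • L (X u - Xs))) u := hW'eq ▸ hWmessy
    -- derivative of F ∘ X
    have hFXd : HasDerivAt (fun s => F (X s)) ⟪gradient F (X u), deriv X u⟫ u := by
      have hgrad : HasGradientAt F (gradient F (X u)) (X u) :=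
        (hF.differentiable one_ne_zero (X u)).hasGradientAt
      have h := hgrad.hasFDerivAt.comp_hasDerivAt u hVu
      simpa [InnerProductSpace.toDual_apply_apply, Function.comp_def] using h
    -- abbreviations for scalar quantities
    set n : ℝ := u ^ (-β) with hn
    set a : ℝ := ⟪gradient F (X u), deriv X u⟫ with ha
    set b : ℝ := ⟪gradient F (X u), X u - Xs⟫ with hb
    set c : ℝ := ⟪X u - Xs, L (X u - Xs)⟫ with hc
    set d : ℝ := ⟪deriv X u, L (X u - Xs)⟫ with hd
    set fv : ℝ := F (X u) - F Xs with hfv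
    -- rpow identities
    have e1 : u ^ (2 - β) = u ^ 2 * n := by
      rw [hn, show (2 - β) = 2 + (-β) by ring, Real.rpow_add hupos, ← Real.rpow_natCast u 2]
      norm_num
    have e2 : u ^ (1 - β) = u * n := by
      rw [hn, show (1 - β) = 1 + (-β) by ring, Real.rpow_add hupos, Real.rpow_one]
    have e3 : u ^ (2 - β - 1) = u * n := by
      rw [show (2 - β - 1) = 1 - β by ring]; exact e2
    -- symmetry fact
    have hdd : ⟪X u - Xs, L (deriv X u)⟫ = d := by
      rw [hd, ← hsym]; exact real_inner_comm _ _
    -- term 1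
    have d1 : HasDerivAt (fun r =>
        (1/2) * ⟪r • deriv X r + (2:ℝ) • (X r - Xs), r • deriv X r + (2:ℝ) • (X r - Xs)⟫)
        (-(u^2 * n * a + 2 * u * n * b + u^2 * d + 2 * u * c)) u := by
      have h := (hW.inner ℝ hW).const_mul (1/2 : ℝ)
      have heq : (1/2 : ℝ) * (⟪u • deriv X u + (2:ℝ) • (X u - Xs),
            -((u * n) • gradient F (X u) + u • L (X u - Xs))⟫
          + ⟪-((u * n) • gradient F (X u) + u • L (X u - Xs)),
            u • deriv X u + (2:ℝ) • (X u - Xs)⟫)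
          = -(u^2 * n * a + 2 * u * n * b + u^2 * d + 2 * u * c) := by
        simp only [inner_neg_left, inner_neg_right, inner_add_left, inner_add_right,
          real_inner_smul_left, real_inner_smul_right]
        rw [ha, hb, hc, hd, real_inner_comm (gradient F (X u)) (deriv X u),
          real_inner_comm (gradient F (X u)) (X u - Xs),
          real_inner_comm (L (X u - Xs)) (deriv X u),
          real_inner_comm (L (X u - Xs)) (X u - Xs)]
        ring
      rw [heq] at h
      exact h
    -- term 2
    have hLYd : HasDerivAt (fun s => L (X s - Xs)) (L (deriv X u)) u :=
      L.hasFDerivAt.comp_hasDerivAt u hYd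
    have d2 : HasDerivAt (fun r => (r ^ 2 / 2) * ⟪X r - Xs, L (X r - Xs)⟫)
        (u * c + u ^ 2 * d) u := by
      have h := ((hasDerivAt_pow 2 u).div_const 2).mul (hYd.inner ℝ hLYd)
      have heq : ((2:ℕ):ℝ) * u ^ (2 - 1) / 2 * ⟪X u - Xs, L (X u - Xs)⟫
          + (u ^ 2 / 2) * (⟪X u - Xs, L (deriv X u)⟫ + ⟪deriv X u, L (X u - Xs)⟫)
          = u * c + u ^ 2 * d := by
        rw [hdd, ← hc, ← hd]
        push_cast
        ring
      rw [heq] at h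
      exact h
    -- term 3
    have d3 : HasDerivAt (fun r => r ^ (2 - β) * (F (X r) - F Xs))
        ((2 - β) * (u * n) * fv + (u ^ 2 * n) * a) u := by
      have h := (Real.hasDerivAt_rpow_const (p := 2 - β) (Or.inl hupos.ne')).mul
        (hFXd.sub_const (F Xs))
      have heq : (2 - β) * u ^ (2 - β - 1) * (F (X u) - F Xs)
          + u ^ (2 - β) * ⟪gradient F (X u), deriv X u⟫
          = (2 - β) * (u * n) * fv + (u ^ 2 * n) * a := by
        rw [e3, e1, ← ha, ← hfv]
      rw [heq] at h
      exact h
    -- terms 4–6 (FTC)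
    have d4 : HasDerivAt (fun r => ∫ s in t₀..r, s * ⟪X s - Xs, L (X s - Xs)⟫)
        (u * c) u := by
      have h := intervalIntegral.integral_hasDerivAt_right
        ((hg1c.mono hsub).intervalIntegrable)
        (hmeas _ hg1c) (hg1c.continuousAt (isOpen_Ioi.mem_nhds huI))
      exact h
    have d5 : HasDerivAt (fun r => ∫ s in t₀..r,
        s ^ (1 - β) * (F Xs - F (X s) - ⟪gradient F (X s), Xs - X s⟫))
        ((u * n) * (-fv + b)) u := by
      have h := intervalIntegral.integral_hasDerivAt_right
        ((hg2c.mono hsub).intervalIntegrable)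
        (hmeas _ hg2c) (hg2c.continuousAt (isOpen_Ioi.mem_nhds huI))
      have heq : u ^ (1 - β) * (F Xs - F (X u) - ⟪gradient F (X u), Xs - X u⟫)
          = (u * n) * (-fv + b) := by
        rw [e2, hfv, hb, show Xs - X u = -(X u - Xs) by abel, inner_neg_right]
        ring
      rw [heq] at h
      exact h
    have d6 : HasDerivAt (fun r => ∫ s in t₀..r, s ^ (1 - β) * (F (X s) - F Xs))
        ((u * n) * fv) u := by
      have h := intervalIntegral.integral_hasDerivAt_right
        ((hg3c.mono hsub).intervalIntegrable)
        (hmeas _ hg3c) (hg3c.continuousAt (isOpen_Ioi.mem_nhds huI))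
      have heq : u ^ (1 - β) * (F (X u) - F Xs) = (u * n) * fv := by
        rw [e2, hfv]
      rw [heq] at h
      exact h
    -- assemble
    have total := ((((d1.add d2).add d3).add d4).add (d5.const_mul (2:ℝ))).add
      (d6.const_mul β)
    have hzero : -(u^2 * n * a + 2 * u * n * b + u^2 * d + 2 * u * c)
        + (u * c + u ^ 2 * d)
        + ((2 - β) * (u * n) * fv + (u ^ 2 * n) * a)
        + u * c
        + 2 * ((u * n) * (-fv + b))
        + β * ((u * n) * fv) = 0 := by ring
    rw [hzero] at total
    exact total
  have hcont : ContinuousOn E (Set.Icc t₀ t) := fun u hu =>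
    ((key u hu).continuousAt).continuousWithinAt
  have hEt : E t = E t₀ :=
    constant_of_has_deriv_right_zero hcont
      (fun u hu => (key u ⟨hu.1, le_of_lt hu.2⟩).hasDerivWithinAt) t ⟨ht, le_refl t⟩
  rw [← real_inner_self_eq_norm_sq, ← real_inner_self_eq_norm_sq]
  have h := hEt
  simp only [hEdef, intervalIntegral.integral_same, mul_zero, add_zero] at h
  exact h
end

section
/- Let t₀ > 0 and let X : (0,∞) → H be twice continuously differentiable and satisfy the Dist-AGM dynamics Ẍ(t) + (3/t)·Ẋ(t) + t^{−β}·∇F(X(t)) + L̃X(t) = 0 for all t > 0. Assume in addition that F is convex and that F(X(s)) ≥ F* for all s ≥ t₀. Then for every t ≥ t₀, t^{2−β}·(F(X(t)) − F*) ≤ (1/2)·‖t₀·Ẋ(t₀) + 2(X(t₀) − X*)‖² + (t₀²/2)·⟨X(t₀) − X*, L̃(X(t₀) − X*)⟩ + t₀^{2−β}·(F(X(t₀)) − F*). -/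
open scoped RealInnerProductSpace

lemma grad_convex_ineq {H : Type*} [NormedAddCommGroup H] [InnerProductSpace ℝ H]
    [FiniteDimensional ℝ H]
    (F : H → ℝ) (hF : ContDiff ℝ 1 F) (hconv : ConvexOn ℝ Set.univ F) (x y : H) :
    F x - F y ≤ ⟪gradient F x, x - y⟫ := by
  have hdiff : Differentiable ℝ F := hF.differentiable one_ne_zero
  set A : ℝ →ᵃ[ℝ] H := AffineMap.lineMap y x with hA
  have hgc : ConvexOn ℝ Set.univ (F ∘ A) := by
    have := hconv.comp_affineMap A
    simpa using this
  have hline : ∀ s : ℝ, HasDerivAt (fun s : ℝ => A s) (x - y) s := by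
    intro s
    have h1 : HasDerivAt (fun s : ℝ => s • (x - y) + y) ((1:ℝ) • (x - y)) s :=
      ((hasDerivAt_id s).smul_const (x - y)).add_const y
    have : (fun s : ℝ => A s) = fun s : ℝ => s • (x - y) + y := by
      funext s; simp [hA, AffineMap.lineMap_apply_module]; module
    rw [this]; simpa using h1
  have hg : ∀ s : ℝ, HasDerivAt (F ∘ A) ⟪gradient F (A s), x - y⟫ s := by
    intro s
    have hgr : HasGradientAt F (gradient F (A s)) (A s) :=
      (hdiff (A s)).hasGradientAt
    have := hgr.hasFDerivAt.comp_hasDerivAt s (hline s)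
    simpa [InnerProductSpace.toDual_apply_apply] using this
  have hs := hgc.slope_le_deriv (Set.mem_univ (0:ℝ)) (Set.mem_univ (1:ℝ)) one_pos
    (hg 1).differentiableAt
  rw [(hg 1).deriv] at hs
  have h0 : A (0:ℝ) = y := by simp [hA]
  have h1 : A (1:ℝ) = x := by simp [hA]
  have hslope : slope (F ∘ A) 0 1 = F x - F y := by
    simp [slope_def_field, h0, h1, Function.comp]
  rw [hslope, h1] at hs
  exact hs

/-- Function-value bound along the Dist-AGM dynamics: for `t ≥ t₀`,
`t^{2−β}(F(X(t)) − F*)` is bounded by the initial energy. -/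
theorem distAGM_function_value_bound
    {H : Type*} [NormedAddCommGroup H] [InnerProductSpace ℝ H] [FiniteDimensional ℝ H]
    (F : H → ℝ) (hF : ContDiff ℝ 1 F) (hconv : ConvexOn ℝ Set.univ F)
    (L : H →L[ℝ] H) (hsym : ∀ x y : H, ⟪L x, y⟫ = ⟪x, L y⟫)
    (hpsd : ∀ x : H, 0 ≤ ⟪x, L x⟫)
    (Xs : H) (hXs : L Xs = 0)
    (β : ℝ) (hβ : 0 < β)
    (t₀ : ℝ) (ht₀ : 0 < t₀)
    (X : ℝ → H) (hX : ContDiffOn ℝ 2 X (Set.Ioi 0))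
    (hode : ∀ t > (0 : ℝ),
      deriv (deriv X) t + (3 / t) • deriv X t
        + (t ^ (-β)) • gradient F (X t) + L (X t) = 0)
    (hlower : ∀ s ≥ t₀, F Xs ≤ F (X s)) :
    ∀ t ≥ t₀,
      t ^ (2 - β) * (F (X t) - F Xs)
      ≤ (1 / 2) * ‖t₀ • deriv X t₀ + (2 : ℝ) • (X t₀ - Xs)‖ ^ 2
        + (t₀ ^ 2 / 2) * ⟪X t₀ - Xs, L (X t₀ - Xs)⟫
        + t₀ ^ (2 - β) * (F (X t₀) - F Xs) := by
  intro t ht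
  have ht0 : (0:ℝ) < t := lt_of_lt_of_le ht₀ ht
  -- basic differentiability
  have hXdiff : ∀ s ∈ Set.Ioi (0:ℝ), HasDerivAt X (deriv X s) s := fun s hs =>
    ((hX.differentiableOn (by norm_num)).differentiableAt
      (isOpen_Ioi.mem_nhds hs)).hasDerivAt
  have hX'cd : ContDiffOn ℝ 1 (deriv X) (Set.Ioi 0) :=
    hX.deriv_of_isOpen isOpen_Ioi (by norm_num)
  have hX'diff : ∀ s ∈ Set.Ioi (0:ℝ), HasDerivAt (deriv X) (deriv (deriv X) s) s := fun s hs =>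
    ((hX'cd.differentiableOn (by norm_num)).differentiableAt
      (isOpen_Ioi.mem_nhds hs)).hasDerivAt
  set Y : ℝ → H := fun s => X s - Xs with hYdef
  set v : ℝ → H := fun s => s • deriv X s + (2:ℝ) • Y s with hvdef
  set E : ℝ → ℝ := fun s =>
    (1/2) * ⟪v s, v s⟫ + (s^2/2) * ⟪Y s, L (Y s)⟫ + s^(2-β) * (F (X s) - F Xs) with hEdef
  set e : ℝ → ℝ := fun s =>
    ⟪v s, s • deriv (deriv X) s + (3:ℝ) • deriv X s⟫
    + (s * ⟪Y s, L (Y s)⟫ + (s^2/2) * (⟪Y s, L (deriv X s)⟫ + ⟪deriv X s, L (Y s)⟫))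
    + ((2-β) * s^(1-β) * (F (X s) - F Xs) + s^(2-β) * ⟪gradient F (X s), deriv X s⟫)
    with hedef
  -- derivative of E
  have hE : ∀ s ∈ Set.Ioi (0:ℝ), HasDerivAt E (e s) s := by
    intro s hs
    have hY : HasDerivAt Y (deriv X s) s := (hXdiff s hs).sub_const Xs
    have hv : HasDerivAt v (s • deriv (deriv X) s + (3:ℝ) • deriv X s) s := by
      have h1 : HasDerivAt (fun y : ℝ => y • deriv X y)
          (s • deriv (deriv X) s + (1:ℝ) • deriv X s) s :=
        (hasDerivAt_id s).smul (hX'diff s hs)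
      have h2 : HasDerivAt (fun y : ℝ => (2:ℝ) • Y y) ((2:ℝ) • deriv X s) s :=
        hY.const_smul (2:ℝ)
      have h3 := h1.add h2
      refine h3.congr_deriv ?_
      module
    have hA : HasDerivAt (fun y => (1/2) * ⟪v y, v y⟫)
        ⟪v s, s • deriv (deriv X) s + (3:ℝ) • deriv X s⟫ s := by
      have h := ((hv.inner ℝ hv)).const_mul (1/2 : ℝ)
      refine h.congr_deriv ?_
      rw [real_inner_comm (v s)]
      ring
    have hB : HasDerivAt (fun y => (y^2/2) * ⟪Y y, L (Y y)⟫)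
        (s * ⟪Y s, L (Y s)⟫
          + (s^2/2) * (⟪Y s, L (deriv X s)⟫ + ⟪deriv X s, L (Y s)⟫)) s := by
      have hLY : HasDerivAt (fun y => L (Y y)) (L (deriv X s)) s :=
        L.hasFDerivAt.comp_hasDerivAt s hY
      have hinner := hY.inner ℝ hLY
      have hsq : HasDerivAt (fun y : ℝ => y^2/2) s s := by
        have := (hasDerivAt_pow 2 s).div_const 2
        refine this.congr_deriv ?_
        push_cast
        ring
      exact hsq.mul hinner
    have hC : HasDerivAt (fun y => y^(2-β) * (F (X y) - F Xs))
        ((2-β) * s^(1-β) * (F (X s) - F Xs)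
          + s^(2-β) * ⟪gradient F (X s), deriv X s⟫) s := by
      have hr : HasDerivAt (fun y : ℝ => y^(2-β)) ((2-β) * s^(2-β-1)) s :=
        Real.hasDerivAt_rpow_const (Or.inl (ne_of_gt hs))
      have hFX : HasDerivAt (fun y => F (X y)) ⟪gradient F (X s), deriv X s⟫ s := by
        have hgr : HasGradientAt F (gradient F (X s)) (X s) :=
          ((hF.differentiable one_ne_zero) (X s)).hasGradientAt
        have := hgr.hasFDerivAt.comp_hasDerivAt s (hXdiff s hs)
        exact this.congr_deriv (by simp only [InnerProductSpace.toDual_apply_apply])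
      have := hr.mul (hFX.sub_const (F Xs))
      rw [show (2-β-1 : ℝ) = 1-β by ring] at this
      exact this
    have := (hA.add hB).add hC
    refine this.congr_deriv ?_
    rfl
  -- the derivative is nonpositive on [t₀, ∞)
  have hkey : ∀ s, t₀ ≤ s → e s ≤ 0 := by
    intro s hts
    have hs0 : (0:ℝ) < s := lt_of_lt_of_le ht₀ hts
    have hsne : s ≠ 0 := ne_of_gt hs0
    have e1 : s * s^(-β) = s^(1-β) := by
      rw [show (1-β : ℝ) = 1 + (-β) by ring, Real.rpow_add hs0, Real.rpow_one]
    have e2 : s * s^(1-β) = s^(2-β) := by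
      rw [show (2-β : ℝ) = 1 + (1-β) by ring, Real.rpow_add hs0, Real.rpow_one]
    have hLXY : L (X s) = L (Y s) := by
      simp [hYdef, map_sub, hXs]
    -- solve for the second derivative from the ODE
    have hode' : s • deriv (deriv X) s + (3:ℝ) • deriv X s
        = -(s^(1-β) • gradient F (X s)) - s • L (Y s) := by
      have h := hode s hs0
      have h2 : s • (deriv (deriv X) s + (3 / s) • deriv X s
          + (s ^ (-β)) • gradient F (X s) + L (X s)) = s • (0:H) := by rw [h]
      rw [smul_zero] at h2
      have h3 : s • deriv (deriv X) s + (3:ℝ) • deriv X s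
          + s^(1-β) • gradient F (X s) + s • L (Y s) = 0 := by
        rw [← h2]
        rw [← hLXY]
        rw [smul_add, smul_add, smul_add, smul_smul, smul_smul, e1]
        congr 2
        rw [show s * (3/s) = 3 by field_simp]
      calc s • deriv (deriv X) s + (3:ℝ) • deriv X s
          = (s • deriv (deriv X) s + (3:ℝ) • deriv X s
              + s^(1-β) • gradient F (X s) + s • L (Y s))
            - s^(1-β) • gradient F (X s) - s • L (Y s) := by abel
        _ = -(s^(1-β) • gradient F (X s)) - s • L (Y s) := by rw [h3]; abel
    have hYLX' : ⟪Y s, L (deriv X s)⟫ = ⟪deriv X s, L (Y s)⟫ := by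
      rw [real_inner_comm, hsym]
    have hgX' : ⟪gradient F (X s), deriv X s⟫ = ⟪deriv X s, gradient F (X s)⟫ :=
      real_inner_comm _ _
    have hconvineq : F (X s) - F Xs ≤ ⟪Y s, gradient F (X s)⟫ := by
      have := grad_convex_ineq F hF hconv (X s) Xs
      rw [real_inner_comm]
      exact this
    have hd : 0 ≤ F (X s) - F Xs := sub_nonneg.2 (hlower s hts)
    have hp4 : 0 ≤ ⟪Y s, L (Y s)⟫ := hpsd (Y s)
    have hpow : (0:ℝ) < s^(1-β) := Real.rpow_pos_of_pos hs0 _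
    rw [hedef]
    simp only [hode', hvdef, hYLX', hgX']
    simp only [inner_sub_right, inner_neg_right, inner_add_left, real_inner_smul_left,
      real_inner_smul_right]
    rw [← e2]
    nlinarith [mul_nonneg hpow.le (sub_nonneg.2 hconvineq),
      mul_nonneg (mul_nonneg hpow.le hd) hβ.le, mul_nonneg hs0.le hp4]
  -- E is antitone on [t₀, ∞)
  have hanti : AntitoneOn E (Set.Ici t₀) := by
    apply antitoneOn_of_deriv_nonpos (convex_Ici t₀)
    · intro s hs
      exact ((hE s (lt_of_lt_of_le ht₀ hs)).continuousAt).continuousWithinAt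
    · intro s hs
      rw [interior_Ici] at hs
      exact ((hE s (lt_trans ht₀ hs)).differentiableAt).differentiableWithinAt
    · intro s hs
      rw [interior_Ici] at hs
      rw [(hE s (lt_trans ht₀ hs)).deriv]
      exact hkey s (le_of_lt hs)
  have hEE : E t ≤ E t₀ := hanti Set.self_mem_Ici ht ht
  have h1 : t^(2-β) * (F (X t) - F Xs) ≤ E t := by
    rw [hEdef]
    have n1 : (0:ℝ) ≤ (1/2 : ℝ) * ⟪v t, v t⟫ :=
      mul_nonneg (by norm_num) real_inner_self_nonneg
    have n2 : (0:ℝ) ≤ (t^2/2) * ⟪Y t, L (Y t)⟫ :=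
      mul_nonneg (by positivity) (hpsd (Y t))
    linarith
  have h2 : E t₀ = (1 / 2) * ‖t₀ • deriv X t₀ + (2 : ℝ) • (X t₀ - Xs)‖ ^ 2
        + (t₀ ^ 2 / 2) * ⟪X t₀ - Xs, L (X t₀ - Xs)⟫
        + t₀ ^ (2 - β) * (F (X t₀) - F Xs) := by
    rw [hEdef]
    simp only [hvdef, hYdef]
    rw [real_inner_self_eq_norm_sq]
  exact le_trans (le_trans h1 hEE) (le_of_eq h2)
end

section
/- Fix k ≥ 1 and suppose 0 < s_k ≤ s_{k+1} and s_{k+1} ≤ 2/L̃_{k+1}. Then V_k − V_{k+1} ≥ 2·A_k·q_{k+1} + (s_{k+1}/2)·θ_{k+1}·r_{k+1}, where q_{k+1} = (2θ_k h)^{−β}·(F(X_k) − F*) + (1/2)·⟨X̄_k, L̃X̄_k⟩ − (2θ_{k+1}h)^{−β}·(F(X_{k+1}) − F*) − (1/2)·⟨X̄_{k+1}, L̃X̄_{k+1}⟩ − ⟨G_{k+1}(X_{k+1}), X_k − X_{k+1}⟩ − (s_{k+1}/4)·‖G_k(X_k)‖² − (s_{k+1}/4)·‖G_{k+1}(X_{k+1})‖²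 + (s_k/2)·⟨G_{k+1}(X_{k+1}), G_k(X_k)⟩, with X̄_j = X_j − X*. -/
set_option maxHeartbeats 1000000


open scoped RealInnerProductSpace

noncomputable section

/-- `θ_k = k/2`. -/
def thetaSeq (k : ℕ) : ℝ := (k : ℝ) / 2

/-- `c_k = θ_{k+1} / (θ_{k+1}² − θ_k²)`. -/
def cSeq (k : ℕ) : ℝ := thetaSeq (k + 1) / (thetaSeq (k + 1) ^ 2 - thetaSeq k ^ 2)

/-- `A_k = c_k · θ_k²`. -/
def ASeq (k : ℕ) : ℝ := cSeq k * thetaSeq k ^ 2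

lemma theta_succ (k : ℕ) : thetaSeq (k + 1) = ((k : ℝ) + 1) / 2 := by
  rw [thetaSeq]; push_cast; ring

lemma ASeq_val (k : ℕ) : ASeq k = (k:ℝ)^2*((k:ℝ)+1)/(2*(2*(k:ℝ)+1)) := by
  have hne : (2*(k:ℝ)+1) ≠ 0 := by positivity
  rw [ASeq, cSeq, theta_succ, thetaSeq]
  rw [show (((k:ℝ)+1)/2)^2 - ((k:ℝ)/2)^2 = (2*(k:ℝ)+1)/4 by ring]
  field_simp
  ring

lemma ASeq_succ_val (k : ℕ) :
    ASeq (k+1) = ((k:ℝ)+1)^2*((k:ℝ)+2)/(2*(2*(k:ℝ)+3)) := by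
  have := ASeq_val (k+1)
  push_cast at this
  rw [this]
  have hne : (2*((k:ℝ)+1)+1) ≠ 0 := by positivity
  have hne2 : (2*(k:ℝ)+3) ≠ 0 := by positivity
  field_simp
  ring

lemma hq1' (k : ℕ) : ASeq (k+1) - ASeq k
    = ((k:ℝ)+1)*(4*(k:ℝ)^2+7*(k:ℝ)+2)/(2*(2*(k:ℝ)+1)*(2*(k:ℝ)+3)) := by
  rw [ASeq_succ_val, ASeq_val]
  have h1 : (2*(k:ℝ)+1) ≠ 0 := by positivity
  have h2 : (2*(k:ℝ)+3) ≠ 0 := by positivity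
  field_simp
  ring

lemma hq1 (k : ℕ) : ASeq k ≤ ASeq (k+1) := by
  have := hq1' k
  nlinarith [this, sq_nonneg ((k:ℝ)), Nat.cast_nonneg (α := ℝ) k,
    div_nonneg (by positivity : (0:ℝ) ≤ ((k:ℝ)+1)*(4*(k:ℝ)^2+7*(k:ℝ)+2))
      (by positivity : (0:ℝ) ≤ 2*(2*(k:ℝ)+1)*(2*(k:ℝ)+3))]

lemma hq2 (k : ℕ) : ASeq (k+1) - ASeq k ≤ thetaSeq (k+1) := by
  have key : thetaSeq (k+1) - (ASeq (k+1) - ASeq k)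
      = ((k:ℝ)+1)^2/(2*(2*(k:ℝ)+1)*(2*(k:ℝ)+3)) := by
    rw [theta_succ, ASeq_succ_val, ASeq_val]
    have h1 : (2*(k:ℝ)+1) ≠ 0 := by positivity
    have h2 : (2*(k:ℝ)+3) ≠ 0 := by positivity
    field_simp
    ring
  nlinarith [key, div_nonneg (by positivity : (0:ℝ) ≤ ((k:ℝ)+1)^2)
    (by positivity : (0:ℝ) ≤ 2*(2*(k:ℝ)+1)*(2*(k:ℝ)+3))]

lemma hq3 (k : ℕ) :
    thetaSeq (k+1)^2 ≤ thetaSeq (k+1)/4 + (ASeq k + ASeq (k+1))/2 := by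
  have key : thetaSeq (k+1)/4 + (ASeq k + ASeq (k+1))/2 - thetaSeq (k+1)^2
      = ((k:ℝ)+1)/(8*(2*(k:ℝ)+1)*(2*(k:ℝ)+3)) := by
    rw [theta_succ, ASeq_succ_val, ASeq_val]
    have h1 : (2*(k:ℝ)+1) ≠ 0 := by positivity
    have h2 : (2*(k:ℝ)+3) ≠ 0 := by positivity
    field_simp
    ring
  nlinarith [key, div_nonneg (by positivity : (0:ℝ) ≤ ((k:ℝ)+1))
    (by positivity : (0:ℝ) ≤ 8*(2*(k:ℝ)+1)*(2*(k:ℝ)+3))]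

lemma hq4 (k : ℕ) : 0 ≤ ASeq k := by
  rw [ASeq_val]; positivity

lemma hNA (k : ℕ) : (thetaSeq (k+1) + ASeq k) * thetaSeq k ^ 2
    = ASeq k * thetaSeq (k+1) ^ 2 := by
  rw [theta_succ, ASeq_val, thetaSeq]
  have h1 : (2*(k:ℝ)+1) ≠ 0 := by positivity
  field_simp
  ring

variable {H : Type*} [NormedAddCommGroup H] [InnerProductSpace ℝ H] [FiniteDimensional ℝ H]

lemma grad_inequality (F : H → ℝ) (hF : Differentiable ℝ F) (hconv : ConvexOn ℝ Set.univ F)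
    (x y : H) : F x + ⟪gradient F x, y - x⟫ ≤ F y := by
  set g : ℝ → ℝ := fun t => F (x + t • (y - x)) with hg
  have hcurve : HasDerivAt (fun t : ℝ => x + t • (y - x)) (y - x) 0 := by
    simpa using ((hasDerivAt_id (0:ℝ)).smul_const (y - x)).const_add x
  have hFd : HasFDerivAt F (InnerProductSpace.toDual ℝ H (gradient F x)) x :=
    (hF x).hasGradientAt.hasFDerivAt
  have hgd : HasDerivAt g ⟪gradient F x, y - x⟫ 0 := by
    have hcomp : HasDerivAt g (InnerProductSpace.toDual ℝ H (gradient F x) (y - x)) 0 := by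
      apply HasFDerivAt.comp_hasDerivAt
      · show HasFDerivAt F _ (x + (0:ℝ) • (y - x))
        simpa using hFd
      · exact hcurve
    simpa [InnerProductSpace.toDual_apply_apply] using hcomp
  have hgconv : ConvexOn ℝ Set.univ g := by
    have h2 := hconv.comp_affineMap (AffineMap.lineMap x y : ℝ →ᵃ[ℝ] H)
    simp only [Set.preimage_univ] at h2
    have heq : g = F ∘ ⇑(AffineMap.lineMap x y) := by
      funext t
      simp only [hg, Function.comp_apply, AffineMap.lineMap_apply_module']
      congr 1
      abel
    rw [heq]
    exact h2
  have hslope := hgconv.le_slope_of_hasDerivAt (Set.mem_univ 0) (Set.mem_univ 1) zero_lt_one hgd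
  rw [slope_def_field] at hslope
  have h0 : g 0 = F x := by simp [hg]
  have h1 : g 1 = F y := by simp [hg]
  rw [h0, h1] at hslope
  linarith [hslope]

lemma descent_lemma (F : H → ℝ) (hF : Differentiable ℝ F) (C : ℝ) (hC : 0 ≤ C)
    (hlip : ∀ x y : H, ‖gradient F x - gradient F y‖ ≤ C * ‖x - y‖) (y d : H) :
    F (y + d) ≤ F y + ⟪gradient F y, d⟫ + C * ‖d‖ ^ 2 := by
  set φf : H → ℝ := fun z => F z - ⟪gradient F y, z⟫ with hφf
  set D : H → (H →L[ℝ] ℝ) := fun z =>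
    InnerProductSpace.toDual ℝ H (gradient F z - gradient F y) with hD
  have hder : ∀ z : H, HasFDerivAt φf (D z) z := by
    intro z
    have h1 : HasFDerivAt F (InnerProductSpace.toDual ℝ H (gradient F z)) z :=
      (hF z).hasGradientAt.hasFDerivAt
    have h2 : HasFDerivAt (fun w : H => ⟪gradient F y, w⟫)
        (InnerProductSpace.toDual ℝ H (gradient F y)) z := by
      have := (InnerProductSpace.toDual ℝ H (gradient F y)).hasFDerivAt (x := z)
      simpa [InnerProductSpace.toDual_apply_apply] using this
    have := h1.sub h2
    have e : D z = InnerProductSpace.toDual ℝ H (gradient F z) - InnerProductSpace.toDual ℝ H (gradient F y) := by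
      rw [hD]; exact map_sub _ _ _
    rw [e]; exact this
  have key : ‖φf (y + d) - φf y‖ ≤ (C * ‖d‖) * ‖(y + d) - y‖ := by
    apply Convex.norm_image_sub_le_of_norm_hasFDerivWithin_le
      (f' := D) (s := Metric.closedBall y ‖d‖)
      (fun z _ => (hder z).hasFDerivWithinAt) ?_ (convex_closedBall y ‖d‖) ?_ ?_
    · intro z hz
      rw [hD]
      simp only []
      rw [LinearIsometryEquiv.norm_map]
      calc ‖gradient F z - gradient F y‖ ≤ C * ‖z - y‖ := hlip z y
        _ ≤ C * ‖d‖ := by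
            apply mul_le_mul_of_nonneg_left _ hC
            rw [← dist_eq_norm]; exact Metric.mem_closedBall.mp hz
    · exact Metric.mem_closedBall_self (norm_nonneg d)
    · rw [Metric.mem_closedBall, dist_eq_norm]; simp
  rw [add_sub_cancel_left] at key
  have h3 : φf (y + d) - φf y ≤ C * ‖d‖ * ‖d‖ := (le_abs_self _).trans key
  have h4 : φf (y + d) - φf y = F (y + d) - F y - ⟪gradient F y, d⟫ := by
    simp only [hφf, inner_add_right]; ring
  nlinarith [h3, h4, sq_nonneg ‖d‖]

lemma key_gap (F : H → ℝ) (hF : Differentiable ℝ F) (hconv : ConvexOn ℝ Set.univ F)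
    (Lf : ℝ) (hLf : 0 < Lf)
    (hlip : ∀ x y : H, ‖gradient F x - gradient F y‖ ≤ Lf * ‖x - y‖)
    (L : H →L[ℝ] H) (hsym : ∀ x y : H, ⟪L x, y⟫ = ⟪x, L y⟫)
    (hpsd : ∀ x : H, 0 ≤ ⟪x, L x⟫)
    (lambar : ℝ) (hlam : ‖L‖ = lambar)
    (Xs : H) (hXs : L Xs = 0) (hmin : ∀ Y : H, F Xs ≤ F Y)
    (φ : ℝ) (hφ : 0 < φ) (x : H) :
    φ * (F x - F Xs) + (1/2) * ⟪x - Xs, L (x - Xs)⟫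
      + (1/(4*(φ*Lf+lambar))) * ‖φ • gradient F x + L x‖^2
    ≤ ⟪φ • gradient F x + L x, x - Xs⟫ := by
  have hgradXs : gradient F Xs = 0 := by
    have hloc : IsLocalMin F Xs := Filter.Eventually.of_forall hmin
    rw [gradient, hloc.fderiv_eq_zero, map_zero]
  have hlam0 : 0 ≤ lambar := hlam ▸ norm_nonneg L
  set M : ℝ := φ * Lf + lambar with hMdef
  have hMpos : 0 < M := add_pos_of_pos_of_nonneg (mul_pos hφ hLf) hlam0
  set G : H := φ • gradient F x + L x with hGdef
  -- quadratic expansion helper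
  have hquad : ∀ u e : H, ⟪u + e, L (u + e)⟫ = ⟪u, L u⟫ + 2*⟪L u, e⟫ + ⟪e, L e⟫ := by
    intro u e
    rw [map_add, inner_add_left, inner_add_right, inner_add_right, ← hsym u e]
    rw [real_inner_comm e (L u)]
    ring
  -- x minimizes g(y) = φ F y + ½⟪y,Ly⟫ − ⟪G,y⟫
  have gmin : ∀ y : H,
      φ * F x + (1/2)*⟪x, L x⟫ - ⟪G, x⟫ ≤ φ * F y + (1/2)*⟪y, L y⟫ - ⟪G, y⟫ := by
    intro y
    have hc := grad_inequality F hF hconv x y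
    have hc2 : φ * (F x + ⟪gradient F x, y - x⟫) ≤ φ * F y :=
      mul_le_mul_of_nonneg_left hc hφ.le
    have hq : ⟪y, L y⟫ = ⟪x, L x⟫ + 2*⟪L x, y - x⟫ + ⟪y - x, L (y - x)⟫ := by
      have := hquad x (y - x)
      rwa [add_sub_cancel] at this
    have hpsd' := hpsd (y - x)
    have hiG : ⟪G, y⟫ - ⟪G, x⟫ = φ * ⟪gradient F x, y - x⟫ + ⟪L x, y - x⟫ := by
      rw [hGdef, inner_add_left, inner_add_left, real_inner_smul_left, real_inner_smul_left,
        inner_sub_right, inner_sub_right]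
      ring
    nlinarith [hc2, hq, hpsd', hiG]
  -- descent step from Xs
  set d : H := (1/(2*M)) • G with hddef
  have hdesc := descent_lemma F hF Lf hLf.le hlip Xs d
  rw [hgradXs, inner_zero_left] at hdesc
  have hquadXsd : ⟪Xs + d, L (Xs + d)⟫ = ⟪d, L d⟫ := by
    rw [hquad Xs d, hXs]
    simp [hpsd]
  have hdLd : ⟪d, L d⟫ ≤ lambar * ‖d‖^2 := by
    have h1 := real_inner_le_norm d (L d)
    have h2 := L.le_opNorm d
    rw [hlam] at h2
    nlinarith [norm_nonneg d, norm_nonneg (L d)]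
  have hGd : ⟪G, d⟫ = (1/(2*M)) * ‖G‖^2 := by
    rw [hddef, real_inner_smul_right, real_inner_self_eq_norm_sq]
  have hnd : ‖d‖^2 = (1/(2*M))^2 * ‖G‖^2 := by
    rw [hddef, norm_smul, mul_pow]
    congr 1
    rw [Real.norm_eq_abs, abs_of_pos (one_div_pos.mpr (by linarith : (0:ℝ) < 2*M))]
  have hMne : M ≠ 0 := ne_of_gt hMpos
  have hMd : M * ((1/(2*M))^2 * ‖G‖^2) = (1/(4*M)) * ‖G‖^2 := by
    field_simp
    ring
  have hgm := gmin (Xs + d)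
  have hiGXsd : ⟪G, Xs + d⟫ = ⟪G, Xs⟫ + (1/(2*M)) * ‖G‖^2 := by
    rw [inner_add_right, hGd]
  -- quad at x vs Xs
  have hqx : ⟪x - Xs, L (x - Xs)⟫ = ⟪x, L x⟫ - 2*⟪L x, Xs⟫ + ⟪Xs, L Xs⟫ := by
    have := hquad x (-Xs)
    simp only [← sub_eq_add_neg] at this
    rw [this, map_neg, inner_neg_left, inner_neg_right, inner_neg_right]
    ring
  have hXsLXs : ⟪Xs, (L Xs : H)⟫ = 0 := by rw [hXs, inner_zero_right]
  have hLxXs : ⟪L x, Xs⟫ = 0 := by rw [hsym x Xs, hXs, inner_zero_right]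
  have hiGx : ⟪G, x - Xs⟫ = ⟪G, x⟫ - ⟪G, Xs⟫ := by rw [inner_sub_right]
  have hφLf : φ * (Lf * ‖d‖^2) + (1/2)*⟪d, L d⟫ ≤ M * ‖d‖^2 := by
    have := mul_nonneg hlam0 (sq_nonneg ‖d‖)
    rw [hMdef]
    nlinarith [hdLd]
  have hdesc' : F (Xs + d) ≤ F Xs + Lf * ‖d‖^2 := by linarith
  have c1 : φ * F (Xs + d) ≤ φ * (F Xs + Lf * ‖d‖^2) :=
    mul_le_mul_of_nonneg_left hdesc' hφ.le
  have c2 : φ * F x + (1/2)*⟪x, L x⟫ - ⟪G, x⟫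
      ≤ φ * (F Xs + Lf * ‖d‖^2) + (1/2)*⟪d, L d⟫ - ⟪G, Xs⟫ - (1/(2*M)) * ‖G‖^2 := by
    have hg2 := gmin (Xs + d)
    rw [hquadXsd, hiGXsd] at hg2
    linarith
  have h6 : M * ‖d‖^2 = (1/(4*M)) * ‖G‖^2 := by rw [hnd]; exact hMd
  have c3 : φ * (Lf * ‖d‖^2) + (1/2)*⟪d, L d⟫ ≤ (1/(4*M)) * ‖G‖^2 := by linarith
  have hqx2 : ⟪x - Xs, L (x - Xs)⟫ = ⟪x, L x⟫ := by
    rw [hqx, hXsLXs, hLxXs]; ring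
  have hMM : 1/(2*M) = 1/(4*M) + 1/(4*M) := by field_simp; ring
  rw [hqx2, hiGx]
  have expand1 : φ*(F Xs + Lf*‖d‖^2) = φ*F Xs + φ*(Lf*‖d‖^2) := by ring
  have expand2 : φ*(F x - F Xs) = φ*F x - φ*F Xs := by ring
  have hMMg : (1/(2*M))*‖G‖^2 = (1/(4*M))*‖G‖^2 + (1/(4*M))*‖G‖^2 := by
    field_simp
    ring
  linarith [c2, c3, hMMg, expand1, expand2]

/-- `G_k(Y) = (2θ_k h)^{−β} ∇F(Y) + L̃Y`. -/
def Gmap (h β : ℝ) (F : H → ℝ) (L : H →L[ℝ] H) (k : ℕ) (Y : H) : H :=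
  ((2 * thetaSeq k * h) ^ (-β)) • gradient F Y + L Y

/-- `L̃_k = 2·max{λ̄, (kh)^{−β}·L_f}`. -/
def LSmooth (lambar Lf h β : ℝ) (k : ℕ) : ℝ :=
  2 * max lambar (((k : ℝ) * h) ^ (-β) * Lf)

/-- Lyapunov function `V_k` (for `k ≥ 1`). -/
def VSeq (h β : ℝ) (F : H → ℝ) (L : H →L[ℝ] H) (Xs : H) (X Z : ℕ → H) (s : ℕ → ℝ)
    (k : ℕ) : ℝ :=
  2 * ASeq k * (((2 * thetaSeq k * h) ^ (-β)) * (F (X k) - F Xs)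
      + (1 / 2) * ⟪X k - Xs, L (X k - Xs)⟫
      - (s k / 4) * ‖Gmap h β F L k (X k)‖ ^ 2)
    + (1 / s k) * ‖Z (k + 1) - Xs‖ ^ 2

/-- `a_{k+1}` (indexed so that `aSeq … k = a_{k+1}`). -/
def aSeq (h β : ℝ) (F : H → ℝ) (L : H →L[ℝ] H) (Xs : H) (X : ℕ → H) (k : ℕ) : ℝ :=
  ((2 * thetaSeq k * h) ^ (-β)) * (F (X k) - F Xs)
    + (1 / 2) * ⟪X k - Xs, L (X k - Xs)⟫
    - ((2 * thetaSeq (k + 1) * h) ^ (-β)) * (F (X (k + 1)) - F Xs)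
    - (1 / 2) * ⟪X (k + 1) - Xs, L (X (k + 1) - Xs)⟫
    - ⟪Gmap h β F L (k + 1) (X (k + 1)), X k - X (k + 1)⟫

/-- `b_{k+1}` (indexed so that `bSeq … k = b_{k+1}`). -/
def bSeq (h β : ℝ) (F : H → ℝ) (L : H →L[ℝ] H) (X : ℕ → H) (k : ℕ) : ℝ :=
  ‖Gmap h β F L k (X k) - Gmap h β F L (k + 1) (X (k + 1))‖ ^ 2

/-- `ã_{k+1}` (indexed so that `atilSeq … k = ã_{k+1}`). -/
def atilSeq (h β : ℝ) (F : H → ℝ) (L : H →L[ℝ] H) (Xs : H) (X : ℕ → H) (s : ℕ → ℝ)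
    (k : ℕ) : ℝ :=
  aSeq h β F L Xs X k
    + (s k / 2) * ⟪Gmap h β F L (k + 1) (X (k + 1)), Gmap h β F L k (X k)⟫

/-- `b̃_{k+1}` (indexed so that `btilSeq … k = b̃_{k+1}`). -/
def btilSeq (h β : ℝ) (F : H → ℝ) (L : H →L[ℝ] H) (X : ℕ → H) (k : ℕ) : ℝ :=
  ‖Gmap h β F L k (X k)‖ ^ 2 + ‖Gmap h β F L (k + 1) (X (k + 1))‖ ^ 2

/-- `w_{k+1}` (indexed so that `wSeq … k = w_{k+1}`). -/
def wSeq (h β : ℝ) (F : H → ℝ) (L : H →L[ℝ] H) (X : ℕ → H) (k : ℕ) : ℝ :=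
  ⟪Gmap h β F L (k + 1) (X (k + 1)), Gmap h β F L k (X k)⟫

/-- `r_{k+1}` (indexed so that `rSeq … k = r_{k+1}`). -/
def rSeq (h β : ℝ) (F : H → ℝ) (L : H →L[ℝ] H) (Xs : H) (X : ℕ → H) (k : ℕ) : ℝ :=
  -‖((2 * thetaSeq (k + 1) * h) ^ (-β)) • gradient F Xs‖ ^ 2
    + 2 * ⟪((2 * thetaSeq (k + 1) * h) ^ (-β)) • gradient F Xs,
        ((2 * thetaSeq (k + 1) * h) ^ (-β)) • gradient F Xs
          - Gmap h β F L (k + 1) (X (k + 1))⟫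

/-- `q_{k+1}` (indexed so that `qSeq … k = q_{k+1}`). -/
def qSeq (h β : ℝ) (F : H → ℝ) (L : H →L[ℝ] H) (Xs : H) (X : ℕ → H) (s : ℕ → ℝ)
    (k : ℕ) : ℝ :=
  aSeq h β F L Xs X k
    - (s (k + 1) / 4) * ‖Gmap h β F L k (X k)‖ ^ 2
    - (s (k + 1) / 4) * ‖Gmap h β F L (k + 1) (X (k + 1))‖ ^ 2
    + (s k / 2) * ⟪Gmap h β F L (k + 1) (X (k + 1)), Gmap h β F L k (X k)⟫

/-- Key Lyapunov difference bound (proof of Theorem 2, Part I):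
`V_k − V_{k+1} ≥ 2A_k q_{k+1} + (s_{k+1}/2)θ_{k+1} r_{k+1}`. -/
theorem lyapunov_difference_lower_bound
    (F : H → ℝ) (hF : Differentiable ℝ F) (hconv : ConvexOn ℝ Set.univ F)
    (Lf : ℝ) (hLf : 0 < Lf)
    (hlip : ∀ x y : H, ‖gradient F x - gradient F y‖ ≤ Lf * ‖x - y‖)
    (L : H →L[ℝ] H) (hsym : ∀ x y : H, ⟪L x, y⟫ = ⟪x, L y⟫)
    (hpsd : ∀ x : H, 0 ≤ ⟪x, L x⟫)
    (lambar : ℝ) (hlam : ‖L‖ = lambar)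
    (Xs : H) (hXs : L Xs = 0) (hmin : ∀ Y : H, F Xs ≤ F Y)
    (h β : ℝ) (hh : 0 < h) (hβ0 : 0 < β) (hβ2 : β < 2)
    (X Xp Z : ℕ → H) (s : ℕ → ℝ)
    (hspos : ∀ k, 1 ≤ k → 0 < s k)
    (hXp : ∀ k, 1 ≤ k → Xp k = X k - (s k / 2) • Gmap h β F L k (X k))
    (hZupd : ∀ k, 1 ≤ k → Z (k + 1) = Z k - (s k * thetaSeq k) • Gmap h β F L k (X k))
    (hXupd : ∀ k, 1 ≤ k → X (k + 1) = (thetaSeq k ^ 2 / thetaSeq (k + 1) ^ 2) • Xp k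
        + (1 - thetaSeq k ^ 2 / thetaSeq (k + 1) ^ 2) • Z (k + 1))
    (k : ℕ) (hk : 1 ≤ k)
    (hmono : s k ≤ s (k + 1))
    (hstep : s (k + 1) ≤ 2 / LSmooth lambar Lf h β (k + 1)) :
    VSeq h β F L Xs X Z s k - VSeq h β F L Xs X Z s (k + 1)
      ≥ 2 * ASeq k * qSeq h β F L Xs X s k
        + (s (k + 1) / 2) * thetaSeq (k + 1) * rSeq h β F L Xs X k := by
  have hkk : 1 ≤ k + 1 := Nat.le_succ_of_le hk
  have hs1 : 0 < s k := hspos k hk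
  have hs2 : 0 < s (k + 1) := hspos (k + 1) hkk
  have hgradXs : gradient F Xs = 0 := by
    have hloc : IsLocalMin F Xs := Filter.Eventually.of_forall hmin
    rw [gradient, hloc.fderiv_eq_zero, map_zero]
  have hr0 : rSeq h β F L Xs X k = 0 := by
    rw [rSeq, hgradXs]; simp
  have hθ2v : thetaSeq (k + 1) = ((k : ℝ) + 1) / 2 := theta_succ k
  have hθ2pos : 0 < thetaSeq (k + 1) := by rw [hθ2v]; positivity
  have hbase : 0 < 2 * thetaSeq (k + 1) * h := mul_pos (mul_pos two_pos hθ2pos) hh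
  have hφ2pos : 0 < (2 * thetaSeq (k + 1) * h) ^ (-β) := Real.rpow_pos_of_pos hbase _
  have hlam0 : 0 ≤ lambar := hlam ▸ norm_nonneg L
  have hMpos : 0 < ((2 * thetaSeq (k + 1) * h) ^ (-β) * Lf + lambar) := add_pos_of_pos_of_nonneg (mul_pos hφ2pos hLf) hlam0
  -- step size bound
  have hMle : ((2 * thetaSeq (k + 1) * h) ^ (-β) * Lf + lambar) ≤ LSmooth lambar Lf h β (k + 1) := by
    rw [LSmooth]
    have hcast : ((k + 1 : ℕ) : ℝ) * h = 2 * thetaSeq (k + 1) * h := by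
      rw [hθ2v]; push_cast; ring
    rw [hcast]
    have h1 := le_max_left lambar ((2 * thetaSeq (k + 1) * h) ^ (-β) * Lf)
    have h2 := le_max_right lambar ((2 * thetaSeq (k + 1) * h) ^ (-β) * Lf)
    linarith
  have hsM : s (k + 1) * ((2 * thetaSeq (k + 1) * h) ^ (-β) * Lf + lambar) ≤ 2 := by
    have hLpos : 0 < LSmooth lambar Lf h β (k + 1) := lt_of_lt_of_le hMpos hMle
    rw [le_div_iff₀ hLpos] at hstep
    nlinarith [mul_le_mul_of_nonneg_left hMle hs2.le]
  have hs8 : s (k + 1) / 8 ≤ 1 / (4 * ((2 * thetaSeq (k + 1) * h) ^ (-β) * Lf + lambar)) := by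
    rw [div_le_div_iff₀ (by norm_num) (by linarith : (0:ℝ) < 4 * ((2 * thetaSeq (k + 1) * h) ^ (-β) * Lf + lambar))]
    nlinarith [hsM]
  -- key analytic gap inequality
  have hkey := key_gap F hF hconv Lf hLf hlip L hsym hpsd lambar hlam Xs hXs hmin
      ((2 * thetaSeq (k + 1) * h) ^ (-β)) hφ2pos (X (k + 1))
  have hGm : Gmap h β F L (k + 1) (X (k + 1)) = (2 * thetaSeq (k + 1) * h) ^ (-β) • gradient F (X (k + 1)) + L (X (k + 1)) := rfl
  rw [← hGm] at hkey
  have hE2 : 0 ≤ ((2 * thetaSeq (k + 1) * h) ^ (-β) * (F (X (k + 1)) - F Xs) + 1 / 2 * ⟪X (k + 1) - Xs, L (X (k + 1) - Xs)⟫) := by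
    have h1 := hpsd (X (k + 1) - Xs)
    have h2 := mul_nonneg hφ2pos.le (sub_nonneg.mpr (hmin (X (k + 1))))
    linarith
  have hf3 : s (k + 1) / 8 * ‖Gmap h β F L (k + 1) (X (k + 1))‖ ^ 2 ≤ ⟪Gmap h β F L (k + 1) (X (k + 1)), X (k + 1) - Xs⟫ - ((2 * thetaSeq (k + 1) * h) ^ (-β) * (F (X (k + 1)) - F Xs) + 1 / 2 * ⟪X (k + 1) - Xs, L (X (k + 1) - Xs)⟫) := by
    have h1 : s (k + 1) / 8 * ‖Gmap h β F L (k + 1) (X (k + 1))‖ ^ 2 ≤ 1 / (4 * ((2 * thetaSeq (k + 1) * h) ^ (-β) * Lf + lambar)) * ‖Gmap h β F L (k + 1) (X (k + 1))‖ ^ 2 :=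
      mul_le_mul_of_nonneg_right hs8 (sq_nonneg _)
    linarith [hkey]
  have hip1 : s (k + 1) / 8 * ‖Gmap h β F L (k + 1) (X (k + 1))‖ ^ 2 ≤ ⟪Gmap h β F L (k + 1) (X (k + 1)), X (k + 1) - Xs⟫ := by
    linarith [hf3, hE2]
  -- Z-update expansion
  have hZ2 : Z (k + 1 + 1) = Z (k + 1) - (s (k + 1) * thetaSeq (k + 1)) • Gmap h β F L (k + 1) (X (k + 1)) :=
    hZupd (k + 1) hkk
  have hR1 : 1 / s (k + 1) * ‖Z (k + 1 + 1) - Xs‖ ^ 2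
      = 1 / s (k + 1) * ‖Z (k + 1) - Xs‖ ^ 2
        - 2 * thetaSeq (k + 1) * ⟪Gmap h β F L (k + 1) (X (k + 1)), Z (k + 1) - Xs⟫
        + s (k + 1) * thetaSeq (k + 1) ^ 2 * ‖Gmap h β F L (k + 1) (X (k + 1))‖ ^ 2 := by
    rw [hZ2, show Z (k + 1) - (s (k + 1) * thetaSeq (k + 1)) • Gmap h β F L (k + 1) (X (k + 1)) - Xs
        = Z (k + 1) - Xs - (s (k + 1) * thetaSeq (k + 1)) • Gmap h β F L (k + 1) (X (k + 1)) by abel]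
    rw [norm_sub_sq_real, real_inner_smul_right, norm_smul, Real.norm_eq_abs,
      abs_of_pos (mul_pos hs2 hθ2pos), mul_pow,
      real_inner_comm (Z (k + 1) - Xs) (Gmap h β F L (k + 1) (X (k + 1)))]
    field_simp
  -- X-update expansion
  have hXv : X (k + 1) = (thetaSeq k ^ 2 / thetaSeq (k + 1) ^ 2) • (X k - (s k / 2) • Gmap h β F L k (X k))
      + (1 - thetaSeq k ^ 2 / thetaSeq (k + 1) ^ 2) • Z (k + 1) := by
    rw [hXupd k hk, hXp k hk]
  have hθ2ne : thetaSeq (k + 1) ^ 2 ≠ 0 := by rw [hθ2v]; positivity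
  have hinner : ⟪Gmap h β F L (k + 1) (X (k + 1)), X (k + 1)⟫
      = thetaSeq k ^ 2 / thetaSeq (k + 1) ^ 2 * (⟪Gmap h β F L (k + 1) (X (k + 1)), X k⟫ - s k / 2 * ⟪Gmap h β F L (k + 1) (X (k + 1)), Gmap h β F L k (X k)⟫)
        + (1 - thetaSeq k ^ 2 / thetaSeq (k + 1) ^ 2) * ⟪Gmap h β F L (k + 1) (X (k + 1)), Z (k + 1)⟫ := by
    have hc := congrArg (fun y : H => (⟪Gmap h β F L (k + 1) (X (k + 1)), y⟫ : ℝ)) hXv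
    simpa only [inner_add_right, real_inner_smul_right, inner_sub_right] using hc
  have hinner' : thetaSeq (k + 1) ^ 2 * ⟪Gmap h β F L (k + 1) (X (k + 1)), X (k + 1)⟫
      = thetaSeq k ^ 2 * ⟪Gmap h β F L (k + 1) (X (k + 1)), X k⟫ - thetaSeq k ^ 2 * (s k / 2) * ⟪Gmap h β F L (k + 1) (X (k + 1)), Gmap h β F L k (X k)⟫
        + (thetaSeq (k + 1) ^ 2 - thetaSeq k ^ 2) * ⟪Gmap h β F L (k + 1) (X (k + 1)), Z (k + 1)⟫ := by
    rw [hinner]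
    field_simp
  have hR2 : thetaSeq (k + 1) * ⟪Gmap h β F L (k + 1) (X (k + 1)), Z (k + 1) - Xs⟫ + ASeq k * ⟪Gmap h β F L (k + 1) (X (k + 1)), X k - X (k + 1)⟫
      = thetaSeq (k + 1) * ⟪Gmap h β F L (k + 1) (X (k + 1)), X (k + 1) - Xs⟫ + ASeq k * s k / 2 * ⟪Gmap h β F L (k + 1) (X (k + 1)), Gmap h β F L k (X k)⟫ := by
    rw [inner_sub_right, inner_sub_right, inner_sub_right]
    have hv : (thetaSeq (k + 1) + ASeq k) * ⟪Gmap h β F L (k + 1) (X (k + 1)), X (k + 1)⟫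
        = ASeq k * ⟪Gmap h β F L (k + 1) (X (k + 1)), X k⟫ - ASeq k * (s k / 2) * ⟪Gmap h β F L (k + 1) (X (k + 1)), Gmap h β F L k (X k)⟫
          + thetaSeq (k + 1) * ⟪Gmap h β F L (k + 1) (X (k + 1)), Z (k + 1)⟫ := by
      apply mul_left_cancel₀ hθ2ne
      linear_combination (thetaSeq (k + 1) + ASeq k) * hinner'
        + (⟪Gmap h β F L (k + 1) (X (k + 1)), X k⟫ - s k / 2 * ⟪Gmap h β F L (k + 1) (X (k + 1)), Gmap h β F L k (X k)⟫ - ⟪Gmap h β F L (k + 1) (X (k + 1)), Z (k + 1)⟫) * hNA k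
    linarith [hv]
  -- master equality
  have hME : VSeq h β F L Xs X Z s k - VSeq h β F L Xs X Z s (k + 1)
      - 2 * ASeq k * qSeq h β F L Xs X s k
      = (1 / s k - 1 / s (k + 1)) * ‖Z (k + 1) - Xs‖ ^ 2
        + ASeq k * (s (k + 1) - s k) / 2 * ‖Gmap h β F L k (X k)‖ ^ 2
        + ((ASeq k + ASeq (k + 1)) / 2 - thetaSeq (k + 1) ^ 2) * s (k + 1) * ‖Gmap h β F L (k + 1) (X (k + 1))‖ ^ 2
        + 2 * thetaSeq (k + 1) * ⟪Gmap h β F L (k + 1) (X (k + 1)), X (k + 1) - Xs⟫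
        - 2 * (ASeq (k + 1) - ASeq k) * ((2 * thetaSeq (k + 1) * h) ^ (-β) * (F (X (k + 1)) - F Xs) + 1 / 2 * ⟪X (k + 1) - Xs, L (X (k + 1) - Xs)⟫) := by
    simp only [VSeq, qSeq, aSeq]
    linear_combination -hR1 + 2 * hR2
  -- nonnegative pieces
  have P1 : 2 * (ASeq (k + 1) - ASeq k) * (s (k + 1) / 8 * ‖Gmap h β F L (k + 1) (X (k + 1))‖ ^ 2)
      ≤ 2 * (ASeq (k + 1) - ASeq k) * (⟪Gmap h β F L (k + 1) (X (k + 1)), X (k + 1) - Xs⟫ - ((2 * thetaSeq (k + 1) * h) ^ (-β) * (F (X (k + 1)) - F Xs) + 1 / 2 * ⟪X (k + 1) - Xs, L (X (k + 1) - Xs)⟫)) :=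
    mul_le_mul_of_nonneg_left hf3 (by linarith [hq1 k])
  have P2 : 2 * (thetaSeq (k + 1) - (ASeq (k + 1) - ASeq k)) * (s (k + 1) / 8 * ‖Gmap h β F L (k + 1) (X (k + 1))‖ ^ 2)
      ≤ 2 * (thetaSeq (k + 1) - (ASeq (k + 1) - ASeq k)) * ⟪Gmap h β F L (k + 1) (X (k + 1)), X (k + 1) - Xs⟫ :=
    mul_le_mul_of_nonneg_left hip1 (by linarith [hq2 k])
  have P3 : 0 ≤ (1 / s k - 1 / s (k + 1)) * ‖Z (k + 1) - Xs‖ ^ 2 :=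
    mul_nonneg (by rw [sub_nonneg]; exact one_div_le_one_div_of_le hs1 hmono) (sq_nonneg _)
  have P4 : 0 ≤ ASeq k * (s (k + 1) - s k) / 2 * ‖Gmap h β F L k (X k)‖ ^ 2 :=
    mul_nonneg (by nlinarith [hq4 k, hmono]) (sq_nonneg _)
  have P5 : 0 ≤ (thetaSeq (k + 1) / 4 + (ASeq k + ASeq (k + 1)) / 2 - thetaSeq (k + 1) ^ 2)
      * (s (k + 1) * ‖Gmap h β F L (k + 1) (X (k + 1))‖ ^ 2) :=
    mul_nonneg (by linarith [hq3 k]) (mul_nonneg hs2.le (sq_nonneg _))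
  rw [hr0]
  linarith [hME, P1, P2, P3, P4, P5]
end
end

section
/- (Part II of the proof of Theorem 2: initial step.) Suppose the algorithm is initialized with X₀ = Z₀ ∈ H and the first iteration sets X₀⁺ = X₀, Z₁ = Z₀, X₁ = X₀. Let s₀, s₁ satisfy 0 < s₀ ≤ s₁ ≤ 2/L̃₁ and suppose r₁ ≥ 0, where r₁ = −‖(2θ₁h)^{−β}·∇F(X*)‖² + 2·⟨(2θ₁h)^{−β}·∇F(X*), (2θ₁h)^{−β}·∇F(X*) − G₁(X₁)⟩. Then V₁ ≤ V'₀, where V'₀ = (1/s₀)·‖Z₁ − X*‖². -/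
open scoped RealInnerProductSpace

noncomputable section

variable {H : Type*} [NormedAddCommGroup H] [InnerProductSpace ℝ H] [FiniteDimensional ℝ H]

section AuxLemmas

open Set

variable {E : Type*} [NormedAddCommGroup E] [InnerProductSpace ℝ E] [CompleteSpace E]

lemma line_hasDerivAt (φ : E → ℝ) (g : E → E)
    (hg : ∀ z, HasGradientAt φ (g z) z) (x d : E) (t : ℝ) :
    HasDerivAt (fun t : ℝ => φ (t • d + x)) ⟪g (t • d + x), d⟫ t := by
  have hc : HasDerivAt (fun t : ℝ => t • d + x) d t := by
    simpa using ((hasDerivAt_id t).smul_const d).add_const x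
  have hf : HasFDerivAt φ (InnerProductSpace.toDual ℝ E (g (t • d + x))) (t • d + x) :=
    hasGradientAt_iff_hasFDerivAt.mp (hg _)
  exact (by simpa [InnerProductSpace.toDual_apply_apply] using hf.comp_hasDerivAt t hc :  HasDerivAt (φ ∘ fun t : ℝ => t • d + x) ⟪g (t • d + x), d⟫ t)

lemma convex_grad_lb (φ : E → ℝ) (g : E → E) (hconv : ConvexOn ℝ Set.univ φ)
    (hg : ∀ z, HasGradientAt φ (g z) z) (x y : E) :
    φ x + ⟪g x, y - x⟫ ≤ φ y := by
  have hG : ConvexOn ℝ Set.univ (fun t : ℝ => φ (t • (y - x) + x)) := by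
    have h2 := hconv.comp_affineMap (AffineMap.lineMap x y)
    have : (fun t : ℝ => φ (t • (y - x) + x)) = φ ∘ (AffineMap.lineMap x y) := by
      funext t
      simp only [Function.comp_apply, AffineMap.lineMap_apply_module]
      congr 1
      module
    rw [this]
    simpa using h2
  have hd := line_hasDerivAt φ g hg x (y - x) 0
  have hle := hG.le_slope_of_hasDerivAt (mem_univ (0:ℝ)) (mem_univ (1:ℝ)) one_pos hd
  have h0 : ((0:ℝ) • (y - x) + x) = x := by simp
  have h1 : ((1:ℝ) • (y - x) + x) = y := by simp
  rw [h0] at hle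
  rw [slope_def_field] at hle
  simp [h0, h1] at hle
  linarith

lemma descent_lemma_s12 (φ : E → ℝ) (g : E → E) (hg : ∀ z, HasGradientAt φ (g z) z)
    (M : ℝ) (hM : 0 ≤ M) (hlip : ∀ a b, ‖g a - g b‖ ≤ M * ‖a - b‖) (x y : E) :
    φ y ≤ φ x + ⟪g x, y - x⟫ + M / 2 * ‖y - x‖ ^ 2 := by
  set d := y - x with hd
  set ψ : ℝ → ℝ := fun t => φ x + t * ⟪g x, d⟫ + M * ‖d‖ ^ 2 * t ^ 2 / 2 - φ (t • d + x)
    with hψ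
  have hψd : ∀ t : ℝ, HasDerivAt ψ
      (⟪g x, d⟫ + M * ‖d‖ ^ 2 * t - ⟪g (t • d + x), d⟫) t := by
    intro t
    have h1 : HasDerivAt (fun t : ℝ => φ x + t * ⟪g x, d⟫ + M * ‖d‖ ^ 2 * t ^ 2 / 2)
        (⟪g x, d⟫ + M * ‖d‖ ^ 2 * t) t := by
      have ha : HasDerivAt (fun t : ℝ => t * ⟪g x, d⟫) ⟪g x, d⟫ t := by
        simpa using (hasDerivAt_id t).mul_const ⟪g x, d⟫
      have hb : HasDerivAt (fun t : ℝ => M * ‖d‖ ^ 2 * t ^ 2 / 2)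
          (M * ‖d‖ ^ 2 * t) t := by
        have := (hasDerivAt_pow 2 t).const_mul (M * ‖d‖ ^ 2 / 2)
        convert this using 1
        · rfl
        · rfl
        · funext u; ring
        · push_cast; ring
      exact (ha.const_add (φ x)).add hb
    exact h1.sub (line_hasDerivAt φ g hg x d t)
  have hmono : MonotoneOn ψ (Icc (0:ℝ) 1) := by
    apply monotoneOn_of_deriv_nonneg (convex_Icc 0 1)
    · exact fun t _ => ((hψd t).continuousAt).continuousWithinAt
    · intro t _
      exact ((hψd t).differentiableAt).differentiableWithinAt
    · intro t ht
      rw [interior_Icc] at ht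
      rw [(hψd t).deriv]
      have hib : ⟪g (t • d + x) - g x, d⟫ ≤ M * t * ‖d‖ ^ 2 := by
        calc ⟪g (t • d + x) - g x, d⟫ ≤ ‖g (t • d + x) - g x‖ * ‖d‖ :=
              real_inner_le_norm _ _
          _ ≤ M * ‖(t • d + x) - x‖ * ‖d‖ := by
              apply mul_le_mul_of_nonneg_right _ (norm_nonneg d)
              exact hlip _ _
          _ = M * t * ‖d‖ ^ 2 := by
              rw [add_sub_cancel_right, norm_smul]
              simp [abs_of_pos ht.1]
              ring
      have : ⟪g (t • d + x), d⟫ - ⟪g x, d⟫ ≤ M * t * ‖d‖ ^ 2 := by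
        rw [← inner_sub_left]; exact hib
      nlinarith
  have h01 : ψ 0 ≤ ψ 1 := hmono (by norm_num) (by norm_num) (by norm_num)
  have hψ0 : ψ 0 = 0 := by simp [hψ]
  have hψ1 : ψ 1 = φ x + ⟪g x, d⟫ + M * ‖d‖ ^ 2 / 2 - φ y := by
    simp [hψ, hd]
  rw [hψ0, hψ1] at h01
  have hr : M * ‖d‖ ^ 2 / 2 = M / 2 * ‖d‖ ^ 2 := by ring
  linarith

lemma cocoercive (φ : E → ℝ) (g : E → E) (hconv : ConvexOn ℝ Set.univ φ)
    (hg : ∀ z, HasGradientAt φ (g z) z) (M : ℝ) (hM : 0 < M)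
    (hlip : ∀ a b, ‖g a - g b‖ ≤ M * ‖a - b‖) (x y : E) :
    φ x + ⟪g x, y - x⟫ + 1 / (2 * M) * ‖g y - g x‖ ^ 2 ≤ φ y := by
  set u := g y - g x with hu
  set z := y - (1 / M) • u with hz
  have h1 := descent_lemma_s12 φ g hg M hM.le hlip y z
  have h2 := convex_grad_lb φ g hconv hg x z
  have hzy : z - y = -((1 / M) • u) := by rw [hz]; abel
  have hzx : z - x = (y - x) - (1 / M) • u := by rw [hz]; abel
  have e1 : ⟪g y, z - y⟫ = -(1 / M * ⟪g y, u⟫) := by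
    rw [hzy, inner_neg_right, real_inner_smul_right]
  have e2 : ‖z - y‖ ^ 2 = (1 / M) ^ 2 * ‖u‖ ^ 2 := by
    rw [hzy, norm_neg, norm_smul, Real.norm_eq_abs, abs_of_pos (by positivity : (0:ℝ) < 1 / M)]
    ring
  have e3 : ⟪g x, z - x⟫ = ⟪g x, y - x⟫ - 1 / M * ⟪g x, u⟫ := by
    rw [hzx, inner_sub_right, real_inner_smul_right]
  have e4 : ⟪g y, u⟫ - ⟪g x, u⟫ = ‖u‖ ^ 2 := by
    rw [← inner_sub_left, ← hu, real_inner_self_eq_norm_sq]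
  rw [e1, e2] at h1
  rw [e3] at h2
  have hM' : M ≠ 0 := ne_of_gt hM
  have harith : M / 2 * ((1 / M) ^ 2 * ‖u‖ ^ 2) = 1 / (2 * M) * ‖u‖ ^ 2 := by
    field_simp
  rw [harith] at h1
  have hfrac : 1 / M * ⟪g y, u⟫ - 1 / M * ⟪g x, u⟫ = 1 / M * ‖u‖ ^ 2 := by
    rw [← mul_sub, e4]
  have hhalf : 1 / M * ‖u‖ ^ 2 - 1 / (2 * M) * ‖u‖ ^ 2 = 1 / (2 * M) * ‖u‖ ^ 2 := by
    field_simp; ring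
  linarith

end AuxLemmas

set_option maxHeartbeats 1000000 in
/-- Initial step (proof of Theorem 2, Part II): `V₁ ≤ V'₀ = (1/s₀)‖Z₁ − X*‖²`. -/
theorem lyapunov_initial_step
    (F : H → ℝ) (hF : Differentiable ℝ F) (hconv : ConvexOn ℝ Set.univ F)
    (Lf : ℝ) (hLf : 0 < Lf)
    (hlip : ∀ x y : H, ‖gradient F x - gradient F y‖ ≤ Lf * ‖x - y‖)
    (L : H →L[ℝ] H) (hsym : ∀ x y : H, ⟪L x, y⟫ = ⟪x, L y⟫)
    (hpsd : ∀ x : H, 0 ≤ ⟪x, L x⟫)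
    (lambar : ℝ) (hlam : ‖L‖ = lambar)
    (Xs : H) (hXs : L Xs = 0) (hmin : ∀ Y : H, F Xs ≤ F Y)
    (h β : ℝ) (hh : 0 < h) (hβ0 : 0 < β) (hβ2 : β < 2)
    (X Xp Z : ℕ → H) (s : ℕ → ℝ)
    (hspos : ∀ k, 1 ≤ k → 0 < s k)
    (hXp : ∀ k, 1 ≤ k → Xp k = X k - (s k / 2) • Gmap h β F L k (X k))
    (hZupd : ∀ k, 1 ≤ k → Z (k + 1) = Z k - (s k * thetaSeq k) • Gmap h β F L k (X k))
    (hXupd : ∀ k, 1 ≤ k → X (k + 1) = (thetaSeq k ^ 2 / thetaSeq (k + 1) ^ 2) • Xp k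
        + (1 - thetaSeq k ^ 2 / thetaSeq (k + 1) ^ 2) • Z (k + 1))
    (hinit : X 0 = Z 0)
    (hXp0 : Xp 0 = X 0) (hZ1 : Z 1 = Z 0) (hX1 : X 1 = X 0)
    (hs0 : 0 < s 0) (hs01 : s 0 ≤ s 1)
    (hs1 : s 1 ≤ 2 / LSmooth lambar Lf h β 1)
    (hr1 : 0 ≤ rSeq h β F L Xs X 0) :
    VSeq h β F L Xs X Z s 1 ≤ (1 / s 0) * ‖Z 1 - Xs‖ ^ 2 := by
  have hs1pos : 0 < s 1 := hspos 1 le_rfl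
  -- basic numeric facts
  have hbpos : (0:ℝ) < 2 * thetaSeq 1 * h := by
    have : (2:ℝ) * thetaSeq 1 = 1 := by norm_num [thetaSeq]
    rw [this]; linarith
  have hcpos : (0:ℝ) < (2 * thetaSeq 1 * h) ^ (-β) := Real.rpow_pos_of_pos hbpos _
  have hA1 : ASeq 1 = 1/3 := by norm_num [ASeq, cSeq, thetaSeq]
  have hlam0 : 0 ≤ lambar := hlam ▸ norm_nonneg L
  -- symmetry helper
  have hsym2 : ∀ a b : H, ⟪a, L b⟫ = ⟪L a, b⟫ := fun a b => (hsym a b).symm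
  -- M
  have hcast : ((1:ℕ) : ℝ) * h = 2 * thetaSeq 1 * h := by
    norm_num [thetaSeq]
  have hMeq : LSmooth lambar Lf h β 1 = 2 * max lambar ((2 * thetaSeq 1 * h) ^ (-β) * Lf) := by
    unfold LSmooth
    rw [hcast]
  have hMpos : 0 < LSmooth lambar Lf h β 1 := by
    rw [hMeq]
    have h1 : 0 < (2 * thetaSeq 1 * h) ^ (-β) * Lf := mul_pos hcpos hLf
    have h2 := le_max_right lambar ((2 * thetaSeq 1 * h) ^ (-β) * Lf)
    linarith
  -- the objective φ and its gradient g
  set M := LSmooth lambar Lf h β 1 with hMdef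
  have hgrad : ∀ z : H, HasGradientAt
      (fun Y : H => ((2 * thetaSeq 1 * h) ^ (-β)) * F Y + (1/2) * ⟪Y, L Y⟫)
      (Gmap h β F L 1 z) z := by
    intro z
    have hF1 : HasFDerivAt F (InnerProductSpace.toDual ℝ H (gradient F z)) z :=
      hasGradientAt_iff_hasFDerivAt.mp (hF z).hasGradientAt
    have h1 : HasFDerivAt (fun Y : H => ((2 * thetaSeq 1 * h) ^ (-β)) * F Y)
        (((2 * thetaSeq 1 * h) ^ (-β)) • InnerProductSpace.toDual ℝ H (gradient F z)) z :=
      hF1.const_mul _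
    have hq : HasFDerivAt (fun Y : H => ⟪Y, L Y⟫)
        ((fderivInnerCLM ℝ (z, L z)).comp ((ContinuousLinearMap.id ℝ H).prod L)) z := by
      exact (hasFDerivAt_id z).inner ℝ L.hasFDerivAt
    have h2 := hq.const_mul (1/2 : ℝ)
    have h3 := h1.add h2
    have heq : (((2 * thetaSeq 1 * h) ^ (-β)) • InnerProductSpace.toDual ℝ H (gradient F z))
        + (1/2 : ℝ) • ((fderivInnerCLM ℝ (z, L z)).comp ((ContinuousLinearMap.id ℝ H).prod L))
        = InnerProductSpace.toDual ℝ H (Gmap h β F L 1 z) := by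
      ext v
      simp only [ContinuousLinearMap.add_apply, ContinuousLinearMap.coe_smul',
        Pi.smul_apply, InnerProductSpace.toDual_apply_apply, ContinuousLinearMap.coe_comp',
        Function.comp_apply, ContinuousLinearMap.prod_apply, ContinuousLinearMap.coe_id',
        id_eq, fderivInnerCLM_apply, smul_eq_mul, Gmap, inner_add_left,
        real_inner_smul_left]
      have e1 : ⟪z, L v⟫ = ⟪L z, v⟫ := hsym2 z v
      have e2 : ⟪v, L z⟫ = ⟪L z, v⟫ := real_inner_comm _ _
      rw [e1, e2]
      ring
    rw [heq] at h3
    exact hasGradientAt_iff_hasFDerivAt.mpr h3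
  -- convexity of φ
  have hφconv : ConvexOn ℝ Set.univ
      (fun Y : H => ((2 * thetaSeq 1 * h) ^ (-β)) * F Y + (1/2) * ⟪Y, L Y⟫) := by
    have h1 : ConvexOn ℝ Set.univ (fun Y : H => ((2 * thetaSeq 1 * h) ^ (-β)) * F Y) := by
      have := hconv.smul hcpos.le
      simpa [smul_eq_mul] using this
    have h2 : ConvexOn ℝ Set.univ (fun Y : H => (1/2 : ℝ) * ⟪Y, L Y⟫) := by
      refine ⟨convex_univ, ?_⟩
      intro p _ q _ a b ha hb hab
      have hexp : ⟪a • p + b • q, L (a • p + b • q)⟫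
          = a^2 * ⟪p, L p⟫ + (a*b) * ⟪p, L q⟫ + (a*b) * ⟪q, L p⟫ + b^2 * ⟪q, L q⟫ := by
        simp only [map_add, map_smul, inner_add_left, inner_add_right,
          real_inner_smul_left, real_inner_smul_right]
        ring
      have hpq : ⟪q, L p⟫ = ⟪p, L q⟫ := by rw [← hsym]; exact real_inner_comm _ _
      have hd := hpsd (p - q)
      have hdex : ⟪p - q, L (p - q)⟫ = ⟪p, L p⟫ - 2 * ⟪p, L q⟫ + ⟪q, L q⟫ := by
        simp only [map_sub, inner_sub_left, inner_sub_right, hpq]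
        ring
      rw [hpq] at hexp
      have hb' : b = 1 - a := by linarith
      subst hb'
      simp only [smul_eq_mul]
      nlinarith [hexp, hdex, mul_nonneg (mul_nonneg ha hb) hd]
    exact h1.add h2
  -- Lipschitz bound for g
  have hglip : ∀ a b : H, ‖Gmap h β F L 1 a - Gmap h β F L 1 b‖ ≤ M * ‖a - b‖ := by
    intro a b
    have hsplit : Gmap h β F L 1 a - Gmap h β F L 1 b
        = ((2 * thetaSeq 1 * h) ^ (-β)) • (gradient F a - gradient F b) + L (a - b) := by
      unfold Gmap
      rw [map_sub, smul_sub]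
      abel
    rw [hsplit]
    have hn1 : ‖((2 * thetaSeq 1 * h) ^ (-β)) • (gradient F a - gradient F b)‖
        ≤ (2 * thetaSeq 1 * h) ^ (-β) * (Lf * ‖a - b‖) := by
      rw [norm_smul, Real.norm_eq_abs, abs_of_pos hcpos]
      exact mul_le_mul_of_nonneg_left (hlip a b) hcpos.le
    have hn2 : ‖L (a - b)‖ ≤ lambar * ‖a - b‖ := by
      rw [← hlam]; exact L.le_opNorm _
    have hm1 : lambar ≤ max lambar ((2 * thetaSeq 1 * h) ^ (-β) * Lf) := le_max_left _ _
    have hm2 : (2 * thetaSeq 1 * h) ^ (-β) * Lf ≤ max lambar ((2 * thetaSeq 1 * h) ^ (-β) * Lf) :=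
      le_max_right _ _
    have hnn : (0:ℝ) ≤ ‖a - b‖ := norm_nonneg _
    calc ‖((2 * thetaSeq 1 * h) ^ (-β)) • (gradient F a - gradient F b) + L (a - b)‖
        ≤ ‖((2 * thetaSeq 1 * h) ^ (-β)) • (gradient F a - gradient F b)‖ + ‖L (a - b)‖ :=
          norm_add_le _ _
      _ ≤ (2 * thetaSeq 1 * h) ^ (-β) * (Lf * ‖a - b‖) + lambar * ‖a - b‖ := by linarith
      _ ≤ M * ‖a - b‖ := by
          rw [hMeq]
          nlinarith
  -- co-coercivity at (X 1, Xs)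
  have hco := cocoercive
    (fun Y : H => ((2 * thetaSeq 1 * h) ^ (-β)) * F Y + (1/2) * ⟪Y, L Y⟫)
    (fun Y : H => Gmap h β F L 1 Y) hφconv hgrad M hMpos hglip (X 1) Xs
  -- rewrite g Xs
  have hgXs : Gmap h β F L 1 Xs = ((2 * thetaSeq 1 * h) ^ (-β)) • gradient F Xs := by
    unfold Gmap
    rw [hXs, add_zero]
  rw [hgXs] at hco
  -- quadratic identities
  have hqXs : ⟪Xs, L Xs⟫ = 0 := by rw [hXs, inner_zero_right]
  have hcross : ⟪Xs, L (X 1)⟫ = 0 := by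
    rw [hsym2, hXs]
    simp
  have hXcross : ⟪X 1, L Xs⟫ = 0 := by rw [hXs, inner_zero_right]
  have hQeq : ⟪X 1 - Xs, L (X 1 - Xs)⟫ = ⟪X 1, L (X 1)⟫ := by
    rw [map_sub, inner_sub_left, inner_sub_right, inner_sub_right, hqXs, hcross, hXcross]
    ring
  -- r₁ bound: ‖g Xs - g X1‖² ≥ ‖g X1‖²
  have hrr : ‖((2 * thetaSeq 1 * h) ^ (-β)) • gradient F Xs - Gmap h β F L 1 (X 1)‖ ^ 2
      = ‖Gmap h β F L 1 (X 1)‖ ^ 2 + rSeq h β F L Xs X 0 := by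
    unfold rSeq
    simp only [Nat.zero_add]
    rw [inner_sub_right, real_inner_self_eq_norm_sq]
    rw [norm_sub_sq_real]
    ring
  -- s1/4 ≤ 1/(2M)
  have hs14 : s 1 / 4 ≤ 1 / (2 * M) := by
    have hsM : s 1 * M ≤ 2 := by
      calc s 1 * M ≤ (2 / M) * M := mul_le_mul_of_nonneg_right hs1 hMpos.le
        _ = 2 := by field_simp
    rw [div_le_div_iff₀ (by norm_num : (0:ℝ) < 4) (mul_pos two_pos hMpos)]
    nlinarith
  -- key inequality
  have hn0 : (0:ℝ) ≤ ‖Gmap h β F L 1 (X 1)‖ ^ 2 := by positivity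
  have hkey : ((2 * thetaSeq 1 * h) ^ (-β)) * (F (X 1) - F Xs)
      + (1/2) * ⟪X 1 - Xs, L (X 1 - Xs)⟫
      + (s 1 / 4) * ‖Gmap h β F L 1 (X 1)‖ ^ 2
      ≤ ⟪Gmap h β F L 1 (X 1), X 1 - Xs⟫ := by
    have hneg : ⟪Gmap h β F L 1 (X 1), Xs - X 1⟫
        = -⟪Gmap h β F L 1 (X 1), X 1 - Xs⟫ := by
      rw [show Xs - X 1 = -(X 1 - Xs) by abel, inner_neg_right]
    rw [hneg, hrr] at hco
    have hb1 : (s 1 / 4) * ‖Gmap h β F L 1 (X 1)‖ ^ 2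
        ≤ 1 / (2 * M) * ‖Gmap h β F L 1 (X 1)‖ ^ 2 :=
      mul_le_mul_of_nonneg_right hs14 hn0
    have hb2 : 1 / (2 * M) * ‖Gmap h β F L 1 (X 1)‖ ^ 2
        ≤ 1 / (2 * M) * (‖Gmap h β F L 1 (X 1)‖ ^ 2 + rSeq h β F L Xs X 0) := by
      have : (0:ℝ) < 1 / (2 * M) := by positivity
      nlinarith
    have hdist : ((2 * thetaSeq 1 * h) ^ (-β)) * (F (X 1) - F Xs)
        = ((2 * thetaSeq 1 * h) ^ (-β)) * F (X 1)
          - ((2 * thetaSeq 1 * h) ^ (-β)) * F Xs := by ring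
    rw [hQeq]
    linarith [hco, hb1, hb2]
  -- expand Z 2
  have hZ2 : Z (1 + 1) = Z 1 - (s 1 * thetaSeq 1) • Gmap h β F L 1 (X 1) := hZupd 1 le_rfl
  have hZ1X : Z 1 - Xs = X 1 - Xs := by rw [hZ1, ← hinit, ← hX1]
  have hnZ2 : ‖Z (1 + 1) - Xs‖ ^ 2 = ‖Z 1 - Xs‖ ^ 2
      - s 1 * ⟪Gmap h β F L 1 (X 1), X 1 - Xs⟫
      + (s 1 ^ 2 / 4) * ‖Gmap h β F L 1 (X 1)‖ ^ 2 := by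
    rw [hZ2]
    have hre : Z 1 - (s 1 * thetaSeq 1) • Gmap h β F L 1 (X 1) - Xs
        = (Z 1 - Xs) - (s 1 * thetaSeq 1) • Gmap h β F L 1 (X 1) := by abel
    rw [hre, norm_sub_sq_real, hZ1X, real_inner_smul_right, norm_smul,
      Real.norm_eq_abs, mul_pow, sq_abs]
    have hth : thetaSeq 1 = 1/2 := by norm_num [thetaSeq]
    rw [hth, real_inner_comm]
    ring
  -- final assembly
  have hX0 : (0:ℝ) ≤ ((2 * thetaSeq 1 * h) ^ (-β)) * (F (X 1) - F Xs) :=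
    mul_nonneg hcpos.le (sub_nonneg.mpr (hmin _))
  have hQ0 : (0:ℝ) ≤ ⟪X 1 - Xs, L (X 1 - Xs)⟫ := hpsd _
  have hnt0 : (0:ℝ) ≤ (s 1 / 4) * ‖Gmap h β F L 1 (X 1)‖ ^ 2 :=
    mul_nonneg (by positivity) hn0
  have hNs : (1 / s 1) * ‖Z 1 - Xs‖ ^ 2 ≤ (1 / s 0) * ‖Z 1 - Xs‖ ^ 2 := by
    apply mul_le_mul_of_nonneg_right _ (by positivity)
    apply one_div_le_one_div_of_le hs0 hs01
  unfold VSeq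
  rw [hA1, hnZ2]
  have hexp : (1 / s 1) * (‖Z 1 - Xs‖ ^ 2
      - s 1 * ⟪Gmap h β F L 1 (X 1), X 1 - Xs⟫
      + (s 1 ^ 2 / 4) * ‖Gmap h β F L 1 (X 1)‖ ^ 2)
      = (1 / s 1) * ‖Z 1 - Xs‖ ^ 2 - ⟪Gmap h β F L 1 (X 1), X 1 - Xs⟫
        + (s 1 / 4) * ‖Gmap h β F L 1 (X 1)‖ ^ 2 := by
    field_simp
  rw [hexp]
  linarith [hkey, hX0, hQ0, hnt0, hNs]
end
end
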